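/- arXiv:1710.02488 — 7 statements merged into one kernel-verified Lean document; each statement's English description precedes it below -/
import Mathlib

section
/- Let m, d, t, N̂ be natural numbers, A_1, …, A_d real N̂×N̂ matrices, c ∈ ℝ^d, c⁽¹⁾, …, c⁽ᵗ⁾ ∈ ℝ^d and λ_1, …, λ_t ∈ ℝ such that for every multi-index k ∈ κ̄_{m,d} one has ∏_{l=1}^d c_l^{k_l} = Σ_{n=1}^t λ_n ∏_{l=1}^d (c⁽ⁿ⁾_l)^{k_l} (exact interpolation of the functional g on κ̄_{m,d}). Then for every integer 1 ≤ p ≤ m, (Σ_{l=1}^d c_l A_l)^p = Σ_{n=1}^t λ_n (Σ_{l=1}^d c⁽ⁿ⁾_l A_l)^p. -/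
lemma expand_pow_aux {d Nhat : ℕ} (A : Fin d → Matrix (Fin Nhat) (Fin Nhat) ℝ)
    (b : Fin d → ℝ) (p : ℕ) :
    (∑ l, b l • A l) ^ p
      = ∑ f : Fin p → Fin d, (∏ i, b (f i)) • (List.ofFn fun i => A (f i)).prod := by
  induction p with
  | zero => simp
  | succ p ih =>
      rw [pow_succ', ih, Finset.mul_sum]
      rw [← (Fin.consEquiv fun _ : Fin (p + 1) => Fin d).sum_comp]
      rw [Fintype.sum_prod_type, Finset.sum_comm]
      refine Finset.sum_congr rfl fun g _ => ?_
      rw [Finset.sum_mul]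
      refine Finset.sum_congr rfl fun l _ => ?_
      simp only [Fin.consEquiv_apply, Fin.prod_cons, List.ofFn_succ, Fin.cons_zero,
        Fin.cons_succ, List.prod_cons]
      rw [Fin.prod_univ_succ]
      simp only [Fin.cons_zero, Fin.cons_succ, smul_mul_assoc, mul_smul_comm]
      rw [mul_smul, smul_smul, smul_smul, mul_comm]

lemma prod_fiber_aux {d p : ℕ} (b : Fin d → ℝ) (f : Fin p → Fin d) :
    ∏ i, b (f i) = ∏ l, b l ^ (Finset.univ.filter fun i => f i = l).card := by
  rw [← Finset.prod_fiberwise_of_maps_to (fun i _ => Finset.mem_univ (f i)) (fun i => b (f i))]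
  refine Finset.prod_congr rfl fun l _ => ?_
  rw [Finset.prod_congr rfl (fun i hi => by rw [(Finset.mem_filter.mp hi).2]),
    Finset.prod_const]

lemma sum_fiber_card_aux {d p : ℕ} (f : Fin p → Fin d) :
    ∑ l, (Finset.univ.filter fun i => f i = l).card = p := by
  rw [← Finset.card_eq_sum_card_fiberwise (fun i _ => Finset.mem_univ (f i))]
  simp

/-- Suppose the coefficient functional `g(k, c) = ∏ l, c l ^ k l` is exactly
interpolated on `κ̄_{m,d}` (multi-indices `k ∈ {0,…,m}^d` with `∑ l, k l ≤ m`):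
`∏ l, c l ^ k l = ∑ n, λ n * ∏ l, (c' n l) ^ k l` for every such `k`. Then for every
`1 ≤ p ≤ m`, `(∑ l, c l • A l) ^ p = ∑ n, λ n • (∑ l, c' n l • A l) ^ p`. -/
theorem exact_interpolation_implies_power_interpolation
    (m d t Nhat : ℕ) (A : Fin d → Matrix (Fin Nhat) (Fin Nhat) ℝ)
    (c : Fin d → ℝ) (c' : Fin t → Fin d → ℝ) (lam : Fin t → ℝ)
    (hinterp : ∀ k : Fin d → Fin (m + 1), (∑ l, (k l : ℕ)) ≤ m →
        ∏ l, c l ^ (k l : ℕ) = ∑ n, lam n * ∏ l, c' n l ^ (k l : ℕ))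
    (p : ℕ) (hp1 : 1 ≤ p) (hpm : p ≤ m) :
    (∑ l, c l • A l) ^ p = ∑ n, lam n • (∑ l, c' n l • A l) ^ p := by
  simp only [expand_pow_aux A _ p, Finset.smul_sum]
  rw [Finset.sum_comm]
  refine Finset.sum_congr rfl fun f _ => ?_
  -- the fiber multi-index of f, valued in Fin (m+1)
  set K : Fin d → ℕ := fun l => (Finset.univ.filter fun i => f i = l).card with hK
  have hKsum : ∑ l, K l = p := sum_fiber_card_aux f
  have hKle : ∀ l, K l < m + 1 := fun l =>
    Nat.lt_succ_of_le (le_trans (le_trans (Finset.single_le_sum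
      (f := K) (fun _ _ => Nat.zero_le _) (Finset.mem_univ l)) hKsum.le) hpm)
  have key := hinterp (fun l => ⟨K l, hKle l⟩) (by simpa [hKsum] using hpm)
  simp only at key
  rw [prod_fiber_aux c f, key, Finset.sum_smul]
  refine Finset.sum_congr rfl fun n _ => ?_
  rw [prod_fiber_aux (c' n) f, mul_smul]
end

section
/- Let A be a real symmetric positive definite n×n matrix and let ρ_M be a real number strictly greater than every eigenvalue of A. Then the series Σ_{k=1}^∞ tr((I − (1/ρ_M) A)^k)/k converges and log(det A) = n·log(ρ_M) − Σ_{k=1}^∞ tr((I − (1/ρ_M) A)^k)/k. -/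
lemma conj_pow_aux {m : ℕ} (U B : Matrix (Fin m) (Fin m) ℝ)
    (hU : U * star U = 1) (hU' : star U * U = 1) (k : ℕ) :
    (U * B * star U) ^ k = U * B ^ k * star U := by
  induction k with
  | zero => simp [hU]
  | succ k ih =>
      rw [pow_succ, ih, pow_succ]
      calc U * B ^ k * star U * (U * B * star U)
          = U * B ^ k * (star U * U) * B * star U := by
            simp only [Matrix.mul_assoc]
        _ = U * (B ^ k * B) * star U := by rw [hU']; simp only [Matrix.mul_one, Matrix.mul_assoc]

/-- Let `A` be a real symmetric positive definite `n × n` matrix and `ρM` a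
real number strictly greater than every eigenvalue of `A`. Then the series
`∑_{k=1}^∞ tr((I − ρM⁻¹ • A) ^ k) / k` converges, with sum `n * log ρM − log (det A)`;
equivalently `log (det A) = n * log ρM − ∑_{k=1}^∞ tr((I − ρM⁻¹ • A) ^ k) / k`. -/
theorem logdet_eq_log_rhoM_sub_trace_power_series
    {n : ℕ} (A : Matrix (Fin n) (Fin n) ℝ) (hA : A.PosDef)
    (ρM : ℝ) (hρM : ∀ i, hA.isHermitian.eigenvalues i < ρM) :
    HasSum (fun k : ℕ => ((1 - ρM⁻¹ • A) ^ (k + 1)).trace / (k + 1 : ℝ))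
      (n * Real.log ρM - Real.log A.det) := by
  classical
  rcases Nat.eq_zero_or_pos n with h0 | h0
  · subst h0
    simpa [Matrix.trace, Matrix.det_isEmpty] using (hasSum_zero :
      HasSum (fun _ : ℕ => (0 : ℝ)) 0)
  set H := hA.isHermitian
  set lam := H.eigenvalues with hlam
  set U : Matrix (Fin n) (Fin n) ℝ := (H.eigenvectorUnitary : Matrix (Fin n) (Fin n) ℝ)
  have hpos : ∀ i, 0 < lam i := fun i => hA.eigenvalues_pos i
  have hρpos : 0 < ρM := (hpos ⟨0, h0⟩).trans (hρM ⟨0, h0⟩)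
  have hUU : U * star U = 1 := H.eigenvectorUnitary.2.2
  have hUU' : star U * U = 1 := H.eigenvectorUnitary.2.1
  have hspec : A = U * Matrix.diagonal lam * star U := by
    have := H.spectral_theorem
    simpa using this
  set x : Fin n → ℝ := fun i => 1 - ρM⁻¹ * lam i with hx
  have hB : (1 : Matrix (Fin n) (Fin n) ℝ) - ρM⁻¹ • A = U * Matrix.diagonal x * star U := by
    have h1 : (1 : Matrix (Fin n) (Fin n) ℝ) = U * 1 * star U := by
      rw [Matrix.mul_one, hUU]
    have h2 : ρM⁻¹ • (U * Matrix.diagonal lam * star U)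
        = U * (ρM⁻¹ • Matrix.diagonal lam) * star U := by
      rw [Matrix.mul_smul, Matrix.smul_mul]
    rw [hspec, h2]
    conv_lhs => rw [h1]
    rw [← Matrix.sub_mul, ← Matrix.mul_sub]
    congr 2
    ext i j
    by_cases h : i = j <;>
      simp [Matrix.diagonal_apply, Matrix.one_apply, h, hx]
  have htr : ∀ k : ℕ, ((1 - ρM⁻¹ • A) ^ (k + 1)).trace = ∑ i, x i ^ (k + 1) := by
    intro k
    rw [hB, conj_pow_aux U _ hUU hUU', ← Matrix.trace_mul_comm,
      ← Matrix.mul_assoc, hUU', Matrix.one_mul, Matrix.diagonal_pow, Matrix.trace_diagonal]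
    simp [Pi.pow_apply]
  have habs : ∀ i, |x i| < 1 := by
    intro i
    have hxi : x i = 1 - ρM⁻¹ * lam i := rfl
    rw [abs_lt, hxi]
    constructor
    · have h2 : ρM⁻¹ * lam i < 1 := by
        rw [inv_mul_eq_div, div_lt_one hρpos]; exact hρM i
      linarith
    · have : 0 < ρM⁻¹ * lam i := mul_pos (inv_pos.mpr hρpos) (hpos i)
      linarith
  have hterm : ∀ i : Fin n, HasSum (fun k : ℕ => x i ^ (k + 1) / (k + 1 : ℝ))
      (Real.log ρM - Real.log (lam i)) := by
    intro i
    have h := Real.hasSum_pow_div_log_of_abs_lt_one (habs i)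
    have heq : 1 - x i = lam i / ρM := by
      have hxi : x i = 1 - ρM⁻¹ * lam i := rfl
      rw [hxi]; field_simp; ring
    rwa [heq, Real.log_div (ne_of_gt (hpos i)) (ne_of_gt hρpos), neg_sub] at h
  have hsum := hasSum_sum (fun i (_ : i ∈ Finset.univ) => hterm i)
  have hdet : Real.log A.det = ∑ i, Real.log (lam i) := by
    have h : A.det = ∏ i, lam i := by simpa using H.det_eq_prod_eigenvalues
    rw [h, Real.log_prod (fun i _ => ne_of_gt (hpos i))]
  have hfinal : ∑ i : Fin n, (Real.log ρM - Real.log (lam i))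
      = n * Real.log ρM - Real.log A.det := by
    rw [Finset.sum_sub_distrib, hdet, Finset.sum_const, Finset.card_univ, Fintype.card_fin,
      nsmul_eq_mul]
  rw [← hfinal]
  convert hsum using 2 with k
  rw [htr k, Finset.sum_div]
end

section
/- Let A be a real symmetric n×n matrix and let 0 < ρ₀ ≤ ρ_M be real numbers such that every eigenvalue r of A satisfies ρ₀ ≤ r < ρ_M. Then for every integer m ≥ 1, | −Σ_{k=1}^{m−1} tr((I − (1/ρ_M) A)^k)/k + n·log(ρ_M) − log(det A) | ≤ n (ρ_M/ρ₀) (1 − ρ₀/ρ_M)^m / m. -/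
open Real Finset Matrix


lemma tail_bound {x : ℝ} (hx0 : 0 ≤ x) (hx1 : x < 1) {m : ℕ} (hm : 1 ≤ m) :
    |(∑ k ∈ Finset.Icc 1 (m - 1), x ^ k / k) + Real.log (1 - x)|
      ≤ x ^ m / (m * (1 - x)) := by
  have habs : |x| < 1 := by rwa [abs_of_nonneg hx0]
  set f : ℕ → ℝ := fun n => x ^ (n + 1) / (n + 1) with hf
  have hs : HasSum f (-Real.log (1 - x)) :=
    Real.hasSum_pow_div_log_of_abs_lt_one habs
  have hsum : Summable f := hs.summable
  have hIcc : (∑ k ∈ Finset.Icc 1 (m - 1), x ^ k / k)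
      = ∑ i ∈ Finset.range (m - 1), f i := by
    rw [← Finset.Ico_add_one_right_eq_Icc, Finset.sum_Ico_eq_sum_range]
    simp [hf, add_comm]
  have htail := hsum.sum_add_tsum_nat_add (m - 1)
  rw [hs.tsum_eq] at htail
  rw [hIcc]
  have key : (∑ i ∈ Finset.range (m - 1), f i) + Real.log (1 - x)
      = -∑' i : ℕ, f (i + (m - 1)) := by linarith
  rw [key, abs_neg]
  have h1x : 0 < 1 - x := by linarith
  have hmpos : (0 : ℝ) < m := by exact_mod_cast hm
  have hterm : ∀ i : ℕ, 0 ≤ f (i + (m - 1)) := by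
    intro i
    have : (0:ℝ) < ((i + (m-1) : ℕ) : ℝ) + 1 := by positivity
    exact div_nonneg (pow_nonneg hx0 _) this.le
  have hsumtail : Summable (fun i : ℕ => f (i + (m - 1))) :=
    (summable_nat_add_iff (m - 1)).2 hsum
  rw [abs_of_nonneg (tsum_nonneg hterm)]
  have hbound : ∀ i : ℕ, f (i + (m - 1)) ≤ x ^ m / m * x ^ i := by
    intro i
    have hmeq : i + (m - 1) + 1 = i + m := by omega
    show x ^ (i + (m - 1) + 1) / ((i + (m - 1) : ℕ) + 1) ≤ x ^ m / m * x ^ i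
    have hd : ((i + (m - 1) : ℕ) : ℝ) + 1 = ((i + m : ℕ) : ℝ) := by exact_mod_cast hmeq
    rw [hmeq, hd]
    have h1 : (m : ℝ) ≤ ((i + m : ℕ) : ℝ) := by exact_mod_cast Nat.le_add_left m i
    have hpos : (0:ℝ) < ((i + m : ℕ) : ℝ) := lt_of_lt_of_le hmpos h1
    rw [div_le_iff₀ hpos]
    have hx' : x ^ (i + m) = x ^ m * x ^ i := by ring
    rw [hx']
    calc x ^ m * x ^ i = x ^ m / m * x ^ i * m := by field_simp
    _ ≤ x ^ m / m * x ^ i * ((i + m : ℕ) : ℝ) :=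
        mul_le_mul_of_nonneg_left h1 (by positivity)
  have hgeom : Summable (fun i : ℕ => x ^ m / m * x ^ i) :=
    (summable_geometric_of_lt_one hx0 hx1).mul_left _
  calc (∑' i : ℕ, f (i + (m - 1)))
      ≤ ∑' i : ℕ, x ^ m / m * x ^ i := Summable.tsum_le_tsum hbound hsumtail hgeom
    _ = x ^ m / m * (1 - x)⁻¹ := by
        rw [tsum_mul_left, tsum_geometric_of_lt_one hx0 hx1]
    _ = x ^ m / (m * (1 - x)) := by field_simp


lemma conj_pow_trace {n : ℕ} (U M : Matrix (Fin n) (Fin n) ℝ)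
    (hU : U * star U = 1) (hU' : star U * U = 1) (k : ℕ) :
    ((U * M * star U) ^ k).trace = (M ^ k).trace := by
  have hconj : ∀ j : ℕ, (U * M * star U) ^ j = U * M ^ j * star U := by
    intro j
    induction j with
    | zero => simp [hU]
    | succ j ih =>
      rw [pow_succ, ih, pow_succ]
      simp only [Matrix.mul_assoc]
      rw [← Matrix.mul_assoc (star U) U, hU', Matrix.one_mul]
  rw [hconj k, Matrix.trace_mul_cycle, hU', Matrix.one_mul]

lemma trace_pow_eq {n : ℕ} (A : Matrix (Fin n) (Fin n) ℝ) (hA : A.IsHermitian)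
    (c : ℝ) (k : ℕ) :
    ((1 - c • A) ^ k).trace = ∑ i, (1 - c * hA.eigenvalues i) ^ k := by
  set U : Matrix (Fin n) (Fin n) ℝ := (hA.eigenvectorUnitary : Matrix (Fin n) (Fin n) ℝ)
  have hU : U * star U = 1 := (Matrix.mem_unitaryGroup_iff).mp hA.eigenvectorUnitary.2
  have hU' : star U * U = 1 := (Matrix.mem_unitaryGroup_iff').mp hA.eigenvectorUnitary.2
  have hspec := hA.spectral_theorem
  have hBD : (1 : Matrix (Fin n) (Fin n) ℝ) - c • A
      = U * (Matrix.diagonal (fun i => 1 - c * hA.eigenvalues i)) * star U := by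
    have h1 : (Matrix.diagonal (fun i => 1 - c * hA.eigenvalues i))
        = 1 - c • Matrix.diagonal (RCLike.ofReal ∘ hA.eigenvalues) := by
      rw [← Matrix.diagonal_one, ← Matrix.diagonal_smul, ← Matrix.diagonal_sub]
      congr 1
    rw [h1]
    rw [Matrix.mul_sub, Matrix.sub_mul, Matrix.mul_one, hU, Matrix.mul_smul,
      Matrix.smul_mul]
    exact congrArg (fun B => 1 - c • B) hspec
  rw [hBD, conj_pow_trace U _ hU hU' k, Matrix.diagonal_pow, Matrix.trace_diagonal]
  simp

lemma det_eq {n : ℕ} (A : Matrix (Fin n) (Fin n) ℝ) (hA : A.IsHermitian) :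
    A.det = ∏ i, hA.eigenvalues i := by
  simpa using hA.det_eq_prod_eigenvalues


/-- Let `A` be a real symmetric `n × n` matrix and `0 < ρ₀ ≤ ρM` with every
eigenvalue `r` of `A` satisfying `ρ₀ ≤ r < ρM`. Then for every `m ≥ 1`,
`| −∑_{k=1}^{m−1} tr((I − ρM⁻¹ • A) ^ k)/k + n log ρM − log det A |
  ≤ n (ρM/ρ₀) (1 − ρ₀/ρM)^m / m`. -/
theorem logdet_partial_sum_error_bound
    {n : ℕ} (A : Matrix (Fin n) (Fin n) ℝ) (hA : A.IsHermitian)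
    (ρ₀ ρM : ℝ) (hρ₀ : 0 < ρ₀) (hρ₀M : ρ₀ ≤ ρM)
    (heig : ∀ i, ρ₀ ≤ hA.eigenvalues i ∧ hA.eigenvalues i < ρM)
    (m : ℕ) (hm : 1 ≤ m) :
    |(-∑ k ∈ Finset.Icc 1 (m - 1), ((1 - ρM⁻¹ • A) ^ k).trace / (k : ℝ))
        + n * Real.log ρM - Real.log A.det|
      ≤ n * (ρM / ρ₀) * (1 - ρ₀ / ρM) ^ m / m := by
  have hρM : 0 < ρM := lt_of_lt_of_le hρ₀ hρ₀M
  set ev := hA.eigenvalues with hev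
  set y : Fin n → ℝ := fun i => 1 - ρM⁻¹ * ev i with hy
  have hy0 : ∀ i, 0 ≤ y i := fun i => by
    have := (heig i).2
    have : ρM⁻¹ * ev i < 1 := by
      rw [inv_mul_lt_iff₀ hρM]; simpa using this
    simp only [hy]; linarith
  have hy1 : ∀ i, y i ≤ 1 - ρ₀ / ρM := fun i => by
    have := (heig i).1
    have h : ρ₀ / ρM ≤ ρM⁻¹ * ev i := by
      rw [div_eq_inv_mul]
      exact mul_le_mul_of_nonneg_left this (inv_nonneg.2 hρM.le)
    simp only [hy]; linarith
  have hq : 0 < ρ₀ / ρM := div_pos hρ₀ hρM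
  have hyl1 : ∀ i, y i < 1 := fun i =>
    lt_of_le_of_lt (hy1 i) (by linarith)
  have h1y : ∀ i, 1 - y i = ρM⁻¹ * ev i := fun i => by simp [hy]
  have hevpos : ∀ i, 0 < ev i := fun i => lt_of_lt_of_le hρ₀ (heig i).1
  -- rewrite trace
  have htr : ∀ k, ((1 - ρM⁻¹ • A) ^ k).trace = ∑ i, y i ^ k := fun k =>
    trace_pow_eq A hA ρM⁻¹ k
  -- rewrite det
  have hdet : Real.log A.det = ∑ i, Real.log (ev i) := by
    have : A.det = ∏ i, ev i := by simpa using hA.det_eq_prod_eigenvalues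
    rw [this, Real.log_prod]
    exact fun i _ => (hevpos i).ne'
  have hlogev : ∀ i, Real.log (ev i) = Real.log ρM + Real.log (1 - y i) := fun i => by
    have h1 : ev i = ρM * (1 - y i) := by
      rw [h1y i, ← mul_assoc, mul_inv_cancel₀ hρM.ne', one_mul]
    rw [h1, Real.log_mul hρM.ne']
    rw [h1y i]
    exact (mul_pos (inv_pos.2 hρM) (hevpos i)).ne'
  -- rearrange
  have key : (-∑ k ∈ Finset.Icc 1 (m - 1), ((1 - ρM⁻¹ • A) ^ k).trace / (k : ℝ))
        + n * Real.log ρM - Real.log A.det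
      = -∑ i, ((∑ k ∈ Finset.Icc 1 (m - 1), y i ^ k / k) + Real.log (1 - y i)) := by
    simp only [htr, hdet, Finset.sum_div, hlogev]
    rw [Finset.sum_comm]
    rw [Finset.sum_add_distrib, Finset.sum_add_distrib, Finset.sum_const,
      Finset.card_univ, Fintype.card_fin]
    push_cast
    ring
  rw [key, abs_neg]
  have hbound : ∀ i ∈ Finset.univ,
      |(∑ k ∈ Finset.Icc 1 (m - 1), y i ^ k / k) + Real.log (1 - y i)|
        ≤ (ρM / ρ₀) * (1 - ρ₀ / ρM) ^ m / m := by
    intro i _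
    refine le_trans (tail_bound (hy0 i) (hyl1 i) hm) ?_
    have hmpos : (0:ℝ) < m := by exact_mod_cast hm
    have h1 : y i ^ m ≤ (1 - ρ₀ / ρM) ^ m := pow_le_pow_left₀ (hy0 i) (hy1 i) m
    have h2 : ρ₀ / ρM ≤ 1 - y i := by
      have := hy1 i; linarith
    have h3 : 0 < ρ₀ / ρM := div_pos hρ₀ hρM
    calc y i ^ m / (m * (1 - y i)) ≤ (1 - ρ₀ / ρM) ^ m / (m * (ρ₀ / ρM)) :=
          div_le_div₀ (pow_nonneg (by have := div_le_one_of_le₀ hρ₀M hρM.le; linarith) m) h1 (by positivity)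
            (mul_le_mul_of_nonneg_left h2 hmpos.le)
        _ = (ρM / ρ₀) * (1 - ρ₀ / ρM) ^ m / m := by
          field_simp
  calc |∑ i, ((∑ k ∈ Finset.Icc 1 (m - 1), y i ^ k / k) + Real.log (1 - y i))|
      ≤ ∑ i, |(∑ k ∈ Finset.Icc 1 (m - 1), y i ^ k / k) + Real.log (1 - y i)| :=
        Finset.abs_sum_le_sum_abs _ _
    _ ≤ ∑ _i : Fin n, (ρM / ρ₀) * (1 - ρ₀ / ρM) ^ m / m := Finset.sum_le_sum hbound
    _ = n * ((ρM / ρ₀) * (1 - ρ₀ / ρM) ^ m / m) := by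
        rw [Finset.sum_const, Finset.card_univ, Fintype.card_fin, nsmul_eq_mul]
    _ = n * (ρM / ρ₀) * (1 - ρ₀ / ρM) ^ m / m := by ring
end

section
/- Under the POD setup, the matrix G is invertible, and for every finite-dimensional real inner product space V, every r ∈ ℝ^N and all vectors v_1, …, v_N ∈ V, ‖Σ_{n=1}^N r_n Σ_{p=1}^N (G⁻¹)_{np} v_p‖_V² ≤ (Σ_{n=1}^N ‖v_n‖_V²) · (Σ_{n=1}^N r_n²/τ_n). -/
open MeasureTheory Bornology
open scoped RealInnerProductSpace

/-- POD setup: `U = L²(K; ℝ)` for a bounded measurable subset `K` of a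
Euclidean space; `g 1, …, g N ∈ U` linearly independent; `C p q = ⟪g p, g q⟫`;
`τ 1 ≥ ⋯ ≥ τ N > 0` and orthonormal `ξ` the eigenvalues/eigenvectors of `(1/N) C`;
`Φ n = (1/√(N τ n)) ∑ p, ξ n p • g p`; `G n p = ⟪g n, Φ p⟫`. Then `G` is invertible, and for
every finite-dimensional real inner product space `V`, every `r ∈ ℝ^N` and all
`v 1, …, v N ∈ V`,
`‖∑ n, r n • ∑ p, (G⁻¹) n p • v p‖² ≤ (∑ n, ‖v n‖²) * (∑ n, (r n)² / τ n)`. -/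
theorem pod_Ginv_bound
    (N q : ℕ) (K : Set (EuclideanSpace ℝ (Fin q)))
    (hKb : IsBounded K) (hKm : MeasurableSet K)
    (g : Fin N → Lp ℝ 2 (volume.restrict K))
    (hg : LinearIndependent ℝ g)
    (τ : Fin N → ℝ) (ξ : Fin N → Fin N → ℝ)
    (hτmono : ∀ i j : Fin N, i ≤ j → τ j ≤ τ i)
    (hτpos : ∀ n, 0 < τ n)
    (heig : ∀ n p, τ n * ξ n p = (1 / (N : ℝ)) * ∑ q', ⟪g p, g q'⟫ * ξ n q')
    (horth : ∀ n m, ∑ p, ξ n p * ξ m p = if n = m then (1 : ℝ) else 0)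
    (Φ : Fin N → Lp ℝ 2 (volume.restrict K))
    (hΦ : ∀ n, Φ n = (Real.sqrt (N * τ n))⁻¹ • ∑ p, ξ n p • g p)
    (G : Matrix (Fin N) (Fin N) ℝ)
    (hG : ∀ n p, G n p = ⟪g n, Φ p⟫) :
    IsUnit G ∧
      ∀ (V : Type) [NormedAddCommGroup V] [InnerProductSpace ℝ V]
        [FiniteDimensional ℝ V] (r : Fin N → ℝ) (v : Fin N → V),
        ‖∑ n, r n • ∑ p, G⁻¹ n p • v p‖ ^ 2 ≤
          (∑ n, ‖v n‖ ^ 2) * (∑ n, r n ^ 2 / τ n) := by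
  have hNpos : ∀ _n : Fin N, 0 < (N : ℝ) := fun n => by exact_mod_cast n.pos
  have hNτ : ∀ n : Fin N, 0 < (N : ℝ) * τ n := fun n =>
    mul_pos (hNpos n) (hτpos n)
  have hsq : ∀ n : Fin N, 0 < Real.sqrt ((N : ℝ) * τ n) := fun n =>
    Real.sqrt_pos.2 (hNτ n)
  -- value of G
  have hGval : ∀ n p, G n p = Real.sqrt ((N : ℝ) * τ p) * ξ p n := by
    intro n p
    have key : ∑ q', ξ p q' * ⟪g n, g q'⟫ = ((N : ℝ) * τ p) * ξ p n := by
      have h := heig p n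
      have hN0 : (N : ℝ) ≠ 0 := ne_of_gt (hNpos n)
      have h' : (N : ℝ) * (τ p * ξ p n) = ∑ q', ⟪g n, g q'⟫ * ξ p q' := by
        field_simp at h
        linarith [h]
      rw [show ∑ q', ξ p q' * ⟪g n, g q'⟫ = ∑ q', ⟪g n, g q'⟫ * ξ p q' from
        Finset.sum_congr rfl fun _ _ => mul_comm _ _, ← h']
      ring
    rw [hG, hΦ p, inner_smul_right, inner_sum]
    simp_rw [inner_smul_right]
    rw [key]
    rw [show (Real.sqrt ((N:ℝ) * τ p))⁻¹ * ((N:ℝ) * τ p * ξ p n)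
        = ((Real.sqrt ((N:ℝ) * τ p))⁻¹ * ((N:ℝ) * τ p)) * ξ p n by ring]
    congr 1
    rw [inv_mul_eq_div, div_eq_iff (ne_of_gt (hsq p)),
      Real.mul_self_sqrt (le_of_lt (hNτ p))]
  -- the inverse matrix
  set B : Matrix (Fin N) (Fin N) ℝ :=
    Matrix.of fun n p => (Real.sqrt ((N : ℝ) * τ n))⁻¹ * ξ n p with hB
  -- column orthogonality
  have hΞ : (Matrix.of ξ) * (Matrix.of ξ).transpose = 1 := by
    ext n m
    simpa [Matrix.mul_apply, Matrix.one_apply] using horth n m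
  have hΞ' := mul_eq_one_comm.mp hΞ
  have hcol : ∀ n m, ∑ p, ξ p n * ξ p m = if n = m then (1 : ℝ) else 0 := by
    intro n m
    have := congrFun (congrFun hΞ' n) m
    simpa [Matrix.mul_apply, Matrix.one_apply] using this
  have hGB : G * B = 1 := by
    ext n m
    rw [Matrix.mul_apply]
    have hterm : ∀ p, G n p * B p m = ξ p n * ξ p m := by
      intro p
      rw [hGval, hB]
      simp only [Matrix.of_apply]
      rw [show Real.sqrt ((N:ℝ) * τ p) * ξ p n * ((Real.sqrt ((N:ℝ) * τ p))⁻¹ * ξ p m)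
          = (Real.sqrt ((N:ℝ) * τ p) * (Real.sqrt ((N:ℝ) * τ p))⁻¹) * (ξ p n * ξ p m) by ring,
        mul_inv_cancel₀ (ne_of_gt (hsq p)), one_mul]
    rw [Finset.sum_congr rfl fun p _ => hterm p, hcol n m]
    simp [Matrix.one_apply]
  have hBG : B * G = 1 := mul_eq_one_comm.mp hGB
  have hInv : G⁻¹ = B := Matrix.inv_eq_right_inv hGB
  refine ⟨⟨⟨G, B, hGB, hBG⟩, rfl⟩, ?_⟩
  intro V _ _ _ r v
  rw [hInv]
  set c : Fin N → ℝ := fun n => r n * (Real.sqrt ((N : ℝ) * τ n))⁻¹ with hc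
  set a : Fin N → ℝ := fun p => ∑ n, c n * ξ n p with ha
  have hrewrite : (∑ n, r n • ∑ p, B n p • v p) = ∑ p, a p • v p := by
    simp_rw [Finset.smul_sum, smul_smul]
    rw [Finset.sum_comm]
    refine Finset.sum_congr rfl fun p _ => ?_
    rw [ha, ← Finset.sum_smul]
    congr 1
    refine Finset.sum_congr rfl fun n _ => ?_
    simp only [hB, hc, Matrix.of_apply]
    ring
  -- Cauchy-Schwarz step
  have h1 : ‖∑ p, a p • v p‖ ≤ ∑ p, ‖v p‖ * |a p| := by
    refine le_trans (norm_sum_le _ _) (le_of_eq ?_)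
    refine Finset.sum_congr rfl fun p _ => ?_
    rw [norm_smul, Real.norm_eq_abs, mul_comm]
  have h2 : (∑ p, ‖v p‖ * |a p|) ^ 2 ≤ (∑ p, ‖v p‖ ^ 2) * ∑ p, |a p| ^ 2 :=
    Finset.sum_mul_sq_le_sq_mul_sq _ _ _
  have hnn : (0:ℝ) ≤ ∑ p, ‖v p‖ * |a p| :=
    Finset.sum_nonneg fun p _ => mul_nonneg (norm_nonneg _) (abs_nonneg _)
  have hCS : ‖∑ p, a p • v p‖ ^ 2 ≤ (∑ p, ‖v p‖ ^ 2) * ∑ p, a p ^ 2 := by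
    calc ‖∑ p, a p • v p‖ ^ 2 ≤ (∑ p, ‖v p‖ * |a p|) ^ 2 :=
          pow_le_pow_left₀ (norm_nonneg _) h1 2
      _ ≤ (∑ p, ‖v p‖ ^ 2) * ∑ p, |a p| ^ 2 := h2
      _ = (∑ p, ‖v p‖ ^ 2) * ∑ p, a p ^ 2 := by simp [sq_abs]
  -- compute ∑ a²
  have hsum : ∑ p, a p ^ 2 = ∑ n, c n ^ 2 := by
    calc ∑ p, a p ^ 2
        = ∑ n, ∑ m, (c n * c m) * ∑ p, ξ n p * ξ m p := by
          simp_rw [ha, sq, Finset.sum_mul_sum, Finset.mul_sum]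
          rw [Finset.sum_comm]
          refine Finset.sum_congr rfl fun n _ => ?_
          rw [Finset.sum_comm]
          exact Finset.sum_congr rfl fun m _ =>
            Finset.sum_congr rfl fun p _ => by ring
      _ = ∑ n, c n ^ 2 := by
          simp_rw [horth]
          simp [sq]
  -- bound ∑ c²
  have hcb : ∑ n, c n ^ 2 ≤ ∑ n, r n ^ 2 / τ n := by
    refine Finset.sum_le_sum fun n _ => ?_
    have hN1 : (1:ℝ) ≤ (N:ℝ) := by
      exact_mod_cast n.pos
    have hcval : c n ^ 2 = r n ^ 2 / ((N:ℝ) * τ n) := by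
      rw [hc]
      rw [mul_pow, ← Real.sqrt_inv, Real.sq_sqrt (inv_nonneg.2 (le_of_lt (hNτ n))),
        div_eq_mul_inv]
    rw [hcval]
    apply div_le_div_of_nonneg_left (sq_nonneg _) (hτpos n)
    nlinarith [hτpos n]
  calc ‖∑ n, r n • ∑ p, B n p • v p‖ ^ 2
      = ‖∑ p, a p • v p‖ ^ 2 := by rw [hrewrite]
    _ ≤ (∑ p, ‖v p‖ ^ 2) * ∑ p, a p ^ 2 := hCS
    _ ≤ (∑ n, ‖v n‖ ^ 2) * (∑ n, r n ^ 2 / τ n) := by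
        rw [hsum]
        exact mul_le_mul_of_nonneg_left hcb
          (Finset.sum_nonneg fun p _ => sq_nonneg _)
end

section
/- In the approximation setting, the following error bound holds (Proposition on the convergence of the nonintrusive approximation): (1/|P|) ∫_P ‖X^N_μ − L_μ‖_V² dμ ≤ 4 (1 + N² Z_N) θ² + (8/|P|) (sup_{μ∈P} ‖L_μ‖_V²) · N δ_N² / τ_N, where θ := inf_{φ ∈ S^{sN}} sup_{μ ∈ P} ‖L_μ − φ(μ)‖_V and S^{sN} is the linear span in C(P, V) of the range of J^N. -/
open MeasureTheory Bornology
open scoped RealInnerProductSpace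

/-- Auxiliary ε-limit lemma. -/
lemma aux_eps_limit {x A C t : ℝ} (hA : 0 ≤ A) (ht : 0 ≤ t)
    (h : ∀ ε > 0, x ≤ A * (t + ε) ^ 2 + C) : x ≤ A * t ^ 2 + C := by
  by_contra hc
  push_neg at hc
  set d := x - (A * t ^ 2 + C) with hd
  have hd0 : 0 < d := by simp only [hd]; linarith
  have hden : 0 < A * (2 * t + 1) + 1 := by nlinarith
  set ε := min 1 (d / (A * (2 * t + 1) + 1)) with hε
  have hεpos : 0 < ε := lt_min one_pos (div_pos hd0 hden)
  have h1 : ε ≤ 1 := min_le_left _ _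
  have h2 : ε ≤ d / (A * (2 * t + 1) + 1) := min_le_right _ _
  have h3 : ε * (A * (2 * t + 1) + 1) ≤ d := (le_div_iff₀ hden).1 h2
  have h4 := h ε hεpos
  have h5 : A * ε * ε ≤ A * ε * 1 :=
    mul_le_mul_of_nonneg_left h1 (mul_nonneg hA hεpos.le)
  nlinarith [mul_nonneg hA (mul_nonneg ht hεpos.le)]

/-- Weighted Cauchy–Schwarz bound for a sum of scalar multiples. -/
lemma aux_norm_sum_sq {V : Type*} [NormedAddCommGroup V] [InnerProductSpace ℝ V] {N : ℕ}
    (a t : Fin N → ℝ) (K : Fin N → V) (ht : ∀ n, 0 < t n) :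
    ‖∑ n, a n • K n‖ ^ 2 ≤ (∑ n, a n ^ 2 / t n) * (∑ n, t n * ‖K n‖ ^ 2) := by
  have hsq : ∀ n, Real.sqrt (t n) ^ 2 = t n := fun n => Real.sq_sqrt (ht n).le
  have hsp : ∀ n, 0 < Real.sqrt (t n) := fun n => Real.sqrt_pos.2 (ht n)
  have h1 : ‖∑ n, a n • K n‖ ≤
      ∑ n, (|a n| / Real.sqrt (t n)) * (Real.sqrt (t n) * ‖K n‖) := by
    refine (norm_sum_le _ _).trans (le_of_eq (Finset.sum_congr rfl fun n _ => ?_))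
    rw [norm_smul, Real.norm_eq_abs]
    have := (hsp n).ne'
    field_simp
  have h2 := Finset.sum_mul_sq_le_sq_mul_sq Finset.univ
    (fun n => |a n| / Real.sqrt (t n)) (fun n => Real.sqrt (t n) * ‖K n‖)
  calc ‖∑ n, a n • K n‖ ^ 2
      ≤ (∑ n, (|a n| / Real.sqrt (t n)) * (Real.sqrt (t n) * ‖K n‖)) ^ 2 :=
        pow_le_pow_left₀ (norm_nonneg _) h1 2
    _ ≤ (∑ n, (|a n| / Real.sqrt (t n)) ^ 2) * (∑ n, (Real.sqrt (t n) * ‖K n‖) ^ 2) := h2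
    _ = (∑ n, a n ^ 2 / t n) * (∑ n, t n * ‖K n‖ ^ 2) := by
        congr 1
        · exact Finset.sum_congr rfl fun n _ => by rw [div_pow, sq_abs, hsq n]
        · exact Finset.sum_congr rfl fun n _ => by rw [mul_pow, hsq n]

set_option maxHeartbeats 2000000 in
/-- (Proposition 1 of the paper.) In the approximation setting (EIM
coefficients `λ`, snapshots `g (μ n)`, POD eigenpairs `(τ, ξ)` and modes `Φ`, matrix `G`,
constant `Z_N`, EIM error `δ_N²`, quantity of interest `L : P → V` approximated by
`X^N_μ = ∑ n, λ n (μ) • L (μ n)`), one has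
`(1/|P|) ∫_P ‖X^N_μ − L_μ‖² dμ ≤ 4 (1 + N² Z_N) θ² + (8/|P|) (sup_{μ∈P} ‖L_μ‖²) N δ_N²/τ_N`,
where `θ = inf_{φ ∈ S^{sN}} sup_{μ ∈ P} ‖L_μ − φ(μ)‖` and `S^{sN}` is the linear span of the
range of the interpolating projector `J^N`. -/
theorem approximation_error_bound_kolmogorov
    (r N q : ℕ) (hN : 0 < N)
    (K : Set (EuclideanSpace ℝ (Fin q)))
    (hKb : IsBounded K) (hKm : MeasurableSet K)
    (P : Set (EuclideanSpace ℝ (Fin r))) (hP : IsCompact P)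
    (hPpos : 0 < (volume P).toReal)
    (g : EuclideanSpace ℝ (Fin r) → Lp ℝ 2 (volume.restrict K))
    (hg : ContinuousOn g P)
    (μs : Fin N → EuclideanSpace ℝ (Fin r)) (hμs : ∀ n, μs n ∈ P)
    (hli : LinearIndependent ℝ (fun n => g (μs n)))
    (lam : EuclideanSpace ℝ (Fin r) → Fin N → ℝ)
    (hlam : ∀ n, ContinuousOn (fun μ => lam μ n) P)
    (δsq : ℝ)
    (hδsq : δsq = ∫ μ in P, ‖(∑ n, lam μ n • g (μs n)) - g μ‖ ^ 2)
    (τ : Fin N → ℝ) (ξ : Fin N → Fin N → ℝ)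
    (hτmono : ∀ i j : Fin N, i ≤ j → τ j ≤ τ i)
    (hτpos : ∀ n, 0 < τ n)
    (heig : ∀ n p, τ n * ξ n p =
        (1 / (N : ℝ)) * ∑ q', ⟪g (μs p), g (μs q')⟫ * ξ n q')
    (horth : ∀ n m, ∑ p, ξ n p * ξ m p = if n = m then (1 : ℝ) else 0)
    (Φ : Fin N → Lp ℝ 2 (volume.restrict K))
    (hΦ : ∀ n, Φ n = (Real.sqrt (N * τ n))⁻¹ • ∑ p, ξ n p • g (μs p))
    (G : Matrix (Fin N) (Fin N) ℝ)
    (hG : ∀ n p, G n p = ⟪g (μs n), Φ p⟫)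
    (hGinv : IsUnit G)
    (Z : ℝ)
    (hZ : Z = (1 / (N : ℝ)) * ∑ n,
        (∫ μ in P, ⟪g μ, Φ n⟫ ^ 2) /
          (((volume P).toReal / N) * ∑ p, ⟪g (μs p), Φ n⟫ ^ 2))
    (V : Type) [NormedAddCommGroup V] [InnerProductSpace ℝ V]
    [FiniteDimensional ℝ V] (hV : 1 ≤ Module.finrank ℝ V)
    (L : EuclideanSpace ℝ (Fin r) → V) (hL : ContinuousOn L P)
    (S : Submodule ℝ (EuclideanSpace ℝ (Fin r) → V))
    (hS : S = Submodule.span ℝ (Set.range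
        (fun v : EuclideanSpace ℝ (Fin r) → V =>
          fun μ => ∑ n, ⟪g μ, Φ n⟫ • ∑ p, G⁻¹ n p • v (μs p))))
    (θ : ℝ)
    (hθ : θ = ⨅ φ : S, ⨆ μ ∈ P, ‖L μ - (φ : EuclideanSpace ℝ (Fin r) → V) μ‖) :
    (1 / (volume P).toReal) * ∫ μ in P, ‖(∑ n, lam μ n • L (μs n)) - L μ‖ ^ 2 ≤
      4 * (1 + (N : ℝ) ^ 2 * Z) * θ ^ 2 +
        (8 / (volume P).toReal) * (⨆ μ ∈ P, ‖L μ‖ ^ 2) *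
          ((N : ℝ) * δsq / τ ⟨N - 1, by omega⟩) := by
  classical
  have hNR : (0 : ℝ) < N := by exact_mod_cast hN
  set PV := (volume P).toReal with hPV
  set τmin := τ ⟨N - 1, by omega⟩ with hτminDef
  have hτminpos : 0 < τmin := hτpos _
  have hτminle : ∀ n, τmin ≤ τ n := by
    intro n
    exact hτmono n ⟨N - 1, by omega⟩ (by simp [Fin.le_def]; omega)
  set s : Fin N → ℝ := fun n => Real.sqrt ((N : ℝ) * τ n) with hsDef
  have hNτpos : ∀ n, 0 < (N : ℝ) * τ n := fun n => mul_pos hNR (hτpos n)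
  have hspos : ∀ n, 0 < s n := fun n => Real.sqrt_pos.2 (hNτpos n)
  have hssq : ∀ n, s n * s n = (N : ℝ) * τ n := fun n => Real.mul_self_sqrt (hNτpos n).le
  -- entries of the Gram-type matrix
  have hGentry : ∀ p n, ⟪g (μs p), Φ n⟫ = s n * ξ n p := by
    intro p n
    have h1 : ∑ q', ⟪g (μs p), g (μs q')⟫ * ξ n q' = (N : ℝ) * τ n * ξ n p := by
      have h := heig n p
      field_simp at h
      linarith
    rw [hΦ n, real_inner_smul_right, inner_sum]
    simp only [real_inner_smul_right]
    have h2 : ∑ q', ξ n q' * ⟪g (μs p), g (μs q')⟫ = (N : ℝ) * τ n * ξ n p := by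
      rw [← h1]
      exact Finset.sum_congr rfl fun q' _ => mul_comm _ _
    rw [h2, ← hssq n]
    field_simp [(hspos n).ne']
    ring
    rw [Real.sqrt_sq (hspos n).le]
    ring
  -- column orthonormality of ξ
  have hcol : ∀ p q', ∑ n, ξ n p * ξ n q' = if p = q' then (1 : ℝ) else 0 := by
    have hmat : (Matrix.of ξ) * (Matrix.of fun p n => ξ n p) = 1 := by
      ext n m
      simpa [Matrix.mul_apply, Matrix.one_apply] using horth n m
    have hmat2 : (Matrix.of fun p n => ξ n p) * (Matrix.of ξ) = 1 :=
      mul_eq_one_comm.mp hmat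
    intro p q'
    have h := congrFun (congrFun hmat2 p) q'
    simpa [Matrix.mul_apply, Matrix.one_apply] using h
  -- Φ is orthonormal
  have hΦorth : Orthonormal ℝ Φ := by
    rw [orthonormal_iff_ite]
    intro m n
    have hsum : ∑ p, ξ m p * (s n * ξ n p) = s n * ∑ p, ξ m p * ξ n p := by
      rw [Finset.mul_sum]
      exact Finset.sum_congr rfl fun p _ => by ring
    have hc : ⟪Φ m, Φ n⟫ = (s m)⁻¹ * (s n * ∑ p, ξ m p * ξ n p) := by
      rw [hΦ m, real_inner_smul_left, sum_inner, ← hsum]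
      simp only [real_inner_smul_left, hGentry]
      rfl
    rw [hc, horth m n]
    by_cases hmn : m = n
    · subst hmn
      simp [(hspos m).ne']
    · simp [hmn]
  have hbessel : ∀ u : Lp ℝ 2 (volume.restrict K), ∑ n, ⟪u, Φ n⟫ ^ 2 ≤ ‖u‖ ^ 2 := by
    intro u
    have h := hΦorth.sum_inner_products_le (s := Finset.univ) u
    calc ∑ n, ⟪u, Φ n⟫ ^ 2 = ∑ n, ‖⟪Φ n, u⟫‖ ^ 2 := by
          refine Finset.sum_congr rfl fun n _ => ?_
          rw [real_inner_comm, Real.norm_eq_abs, sq_abs]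
      _ ≤ ‖u‖ ^ 2 := h
  set H : Fin N → Fin N → ℝ := fun n p => ξ n p / s n with hHDef
  have hξsq : ∀ n, ∑ p, ξ n p ^ 2 = 1 := by
    intro n
    have h := horth n n
    simp only [if_pos rfl] at h
    calc ∑ p, ξ n p ^ 2 = ∑ p, ξ n p * ξ n p := by simp [pow_two]
      _ = 1 := h
  have hHsq : ∀ n, ∑ p, H n p ^ 2 = ((N : ℝ) * τ n)⁻¹ := by
    intro n
    have hssq2 : s n ^ 2 = (N : ℝ) * τ n := by rw [pow_two]; exact hssq n
    simp only [hHDef, div_pow]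
    rw [← Finset.sum_div, hξsq n, hssq2, one_div]
  have hHabs : ∀ n, ∑ p, |H n p| ≤ Real.sqrt N / s n := by
    intro n
    have h2 : ∑ p, |ξ n p| ^ 2 = 1 := by
      calc ∑ p, |ξ n p| ^ 2 = ∑ p, ξ n p ^ 2 := by simp [sq_abs]
        _ = 1 := hξsq n
    have h1 : (∑ p, |ξ n p|) ^ 2 ≤ (N : ℝ) := by
      have hcs := Finset.sum_mul_sq_le_sq_mul_sq Finset.univ (fun p => |ξ n p|) (fun _ => (1:ℝ))
      simpa [hξsq n] using hcs
    have h3 : ∑ p, |ξ n p| ≤ Real.sqrt N := Real.le_sqrt_of_sq_le h1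
    have h4 : ∑ p, |H n p| = (∑ p, |ξ n p|) / s n := by
      rw [Finset.sum_div]
      refine Finset.sum_congr rfl fun p _ => ?_
      simp only [hHDef]
      rw [abs_div, abs_of_pos (hspos n)]
    rw [h4]
    gcongr
  -- lam representation
  have hlamrep : ∀ μ p,
      ∑ n, ⟪(∑ q', lam μ q' • g (μs q')), Φ n⟫ * H n p = lam μ p := by
    intro μ p
    have hinner : ∀ n, ⟪(∑ q', lam μ q' • g (μs q')), Φ n⟫ = s n * ∑ q', lam μ q' * ξ n q' := by
      intro n
      rw [sum_inner]
      simp only [real_inner_smul_left, hGentry]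
      rw [Finset.mul_sum]
      exact Finset.sum_congr rfl fun q' _ => by ring
    calc ∑ n, ⟪(∑ q', lam μ q' • g (μs q')), Φ n⟫ * H n p
        = ∑ n, ∑ q', lam μ q' * (ξ n q' * ξ n p) := by
          refine Finset.sum_congr rfl fun n _ => ?_
          rw [hinner n]
          simp only [hHDef]
          have hne := (hspos n).ne'
          have hcancel : s n * (∑ q', lam μ q' * ξ n q') * (ξ n p / s n)
              = (∑ q', lam μ q' * ξ n q') * ξ n p := by
            field_simp
          rw [hcancel, Finset.sum_mul]
          exact Finset.sum_congr rfl fun q' _ => by ring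
      _ = ∑ q', lam μ q' * ∑ n, ξ n q' * ξ n p := by
          rw [Finset.sum_comm]
          exact Finset.sum_congr rfl fun q' _ => by rw [Finset.mul_sum]
      _ = lam μ p := by
          simp only [hcol]
          simp
  set KK : Fin N → V := fun n => ∑ p, H n p • L (μs p) with hKKDef
  set JL : EuclideanSpace ℝ (Fin r) → V := fun μ => ∑ n, ⟪g μ, Φ n⟫ • KK n with hJLDef
  -- error identity
  have hErr : ∀ μ, (∑ n, lam μ n • L (μs n)) - JL μ =
      ∑ n, ⟪(∑ q', lam μ q' • g (μs q')) - g μ, Φ n⟫ • KK n := by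
    intro μ
    have h1 : ∑ n, ⟪(∑ q', lam μ q' • g (μs q')), Φ n⟫ • KK n = ∑ n, lam μ n • L (μs n) := by
      calc ∑ n, ⟪(∑ q', lam μ q' • g (μs q')), Φ n⟫ • KK n
          = ∑ n, ∑ p, (⟪(∑ q', lam μ q' • g (μs q')), Φ n⟫ * H n p) • L (μs p) := by
            refine Finset.sum_congr rfl fun n _ => ?_
            simp only [hKKDef]
            rw [Finset.smul_sum]
            exact Finset.sum_congr rfl fun p _ => smul_smul _ _ _
        _ = ∑ p, (∑ n, ⟪(∑ q', lam μ q' • g (μs q')), Φ n⟫ * H n p) • L (μs p) := by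
            rw [Finset.sum_comm]
            exact Finset.sum_congr rfl fun p _ => (Finset.sum_smul).symm
        _ = ∑ p, lam μ p • L (μs p) := Finset.sum_congr rfl fun p _ => by rw [hlamrep μ p]
    have h2 : ∑ n, ⟪(∑ q', lam μ q' • g (μs q')) - g μ, Φ n⟫ • KK n
        = (∑ n, ⟪(∑ q', lam μ q' • g (μs q')), Φ n⟫ • KK n) - ∑ n, ⟪g μ, Φ n⟫ • KK n := by
      rw [← Finset.sum_sub_distrib]
      refine Finset.sum_congr rfl fun n _ => ?_
      rw [inner_sub_left, sub_smul]
    rw [h2, h1]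
  -- sup of ‖L‖²
  set Msq := ⨆ μ ∈ P, ‖L μ‖ ^ 2 with hMsqDef
  have hPne : P.Nonempty := ⟨μs ⟨0, hN⟩, hμs _⟩
  have hMsq_le : ∀ μ' ∈ P, ‖L μ'‖ ^ 2 ≤ Msq := by
    obtain ⟨CL, hCL⟩ := hP.exists_bound_of_continuousOn hL
    intro μ' hμ'
    have hb : BddAbove (Set.range fun μ => ⨆ _ : μ ∈ P, ‖L μ‖ ^ 2) := by
      refine ⟨CL ^ 2, ?_⟩
      rintro x ⟨μ, rfl⟩
      exact Real.iSup_le (fun h => by nlinarith [hCL μ h, norm_nonneg (L μ)])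
        (by positivity)
    calc ‖L μ'‖ ^ 2 = ⨆ _ : μ' ∈ P, ‖L μ'‖ ^ 2 := by rw [ciSup_pos hμ']
      _ ≤ Msq := by
          rw [hMsqDef]
          exact le_ciSup hb μ'
  have hMsq0 : 0 ≤ Msq := Real.iSup_nonneg fun μ => Real.iSup_nonneg fun _ => sq_nonneg _
  have hKK_bound : ∀ n, ‖KK n‖ ^ 2 ≤ ((N : ℝ) * τ n)⁻¹ * ((N : ℝ) * Msq) := by
    intro n
    have h1 : ‖KK n‖ ≤ ∑ p, |H n p| * ‖L (μs p)‖ := by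
      simp only [hKKDef]
      refine (norm_sum_le _ _).trans (le_of_eq (Finset.sum_congr rfl fun p _ => ?_))
      rw [norm_smul, Real.norm_eq_abs]
    have h2 : (∑ p, |H n p| * ‖L (μs p)‖) ^ 2 ≤
        (∑ p, H n p ^ 2) * (∑ p, ‖L (μs p)‖ ^ 2) := by
      have hcs := Finset.sum_mul_sq_le_sq_mul_sq Finset.univ
        (fun p => |H n p|) (fun p => ‖L (μs p)‖)
      simpa [sq_abs] using hcs
    have h4 : ∑ p, ‖L (μs p)‖ ^ 2 ≤ (N : ℝ) * Msq := by
      calc ∑ p, ‖L (μs p)‖ ^ 2 ≤ ∑ _p : Fin N, Msq :=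
            Finset.sum_le_sum fun p _ => hMsq_le _ (hμs p)
        _ = (N : ℝ) * Msq := by
            rw [Finset.sum_const, Finset.card_univ, Fintype.card_fin, nsmul_eq_mul]
    calc ‖KK n‖ ^ 2 ≤ (∑ p, |H n p| * ‖L (μs p)‖) ^ 2 :=
          pow_le_pow_left₀ (norm_nonneg _) h1 2
      _ ≤ (∑ p, H n p ^ 2) * (∑ p, ‖L (μs p)‖ ^ 2) := h2
      _ ≤ (∑ p, H n p ^ 2) * ((N : ℝ) * Msq) :=
          mul_le_mul_of_nonneg_left h4 (Finset.sum_nonneg fun p _ => sq_nonneg _)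
      _ = ((N : ℝ) * τ n)⁻¹ * ((N : ℝ) * Msq) := by rw [hHsq n]
  -- pointwise bound for the first term
  have hpt1 : ∀ μ, ‖(∑ n, lam μ n • L (μs n)) - JL μ‖ ^ 2 ≤
      ((N : ℝ) * Msq / τmin) * ‖(∑ n, lam μ n • g (μs n)) - g μ‖ ^ 2 := by
    intro μ
    rw [hErr μ]
    have haux := aux_norm_sum_sq (fun n => ⟪(∑ q', lam μ q' • g (μs q')) - g μ, Φ n⟫)
      (fun _ => (1 : ℝ)) KK (fun _ => one_pos)
    simp only [div_one, one_mul] at haux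
    have h3 : ∑ n, ⟪(∑ q', lam μ q' • g (μs q')) - g μ, Φ n⟫ ^ 2 ≤
        ‖(∑ q', lam μ q' • g (μs q')) - g μ‖ ^ 2 := hbessel _
    have h4 : ∑ n, ‖KK n‖ ^ 2 ≤ (N : ℝ) * Msq / τmin := by
      calc ∑ n, ‖KK n‖ ^ 2 ≤ ∑ n, ((N : ℝ) * τ n)⁻¹ * ((N : ℝ) * Msq) :=
            Finset.sum_le_sum fun n _ => hKK_bound n
        _ ≤ ∑ _n : Fin N, ((N : ℝ) * τmin)⁻¹ * ((N : ℝ) * Msq) := by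
            refine Finset.sum_le_sum fun n _ => ?_
            refine mul_le_mul_of_nonneg_right ?_ (by positivity)
            exact inv_anti₀ (by positivity)
              (mul_le_mul_of_nonneg_left (hτminle n) hNR.le)
        _ = (N : ℝ) * Msq / τmin := by
            rw [Finset.sum_const, Finset.card_univ, Fintype.card_fin, nsmul_eq_mul]
            field_simp
    have h5 : ‖(∑ n, lam μ n • g (μs n)) - g μ‖ ^ 2
        = ‖(∑ q', lam μ q' • g (μs q')) - g μ‖ ^ 2 := rfl
    calc ‖∑ n, ⟪(∑ q', lam μ q' • g (μs q')) - g μ, Φ n⟫ • KK n‖ ^ 2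
        ≤ (∑ n, ⟪(∑ q', lam μ q' • g (μs q')) - g μ, Φ n⟫ ^ 2) * (∑ n, ‖KK n‖ ^ 2) := haux
      _ ≤ ‖(∑ q', lam μ q' • g (μs q')) - g μ‖ ^ 2 * ((N : ℝ) * Msq / τmin) := by
          refine mul_le_mul h3 h4 (Finset.sum_nonneg fun n _ => sq_nonneg _) (by positivity)
      _ = ((N : ℝ) * Msq / τmin) * ‖(∑ n, lam μ n • g (μs n)) - g μ‖ ^ 2 := by
          rw [h5]; ring
  -- integrability facts
  have hIgc : ContinuousOn (fun μ => (∑ n, lam μ n • g (μs n)) - g μ) P := by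
    exact (continuousOn_finset_sum _ fun n _ =>
      (hlam n).smul continuousOn_const).sub hg
  have hInt1 : IntegrableOn (fun μ => ‖(∑ n, lam μ n • g (μs n)) - g μ‖ ^ 2) P volume := by
    exact ContinuousOn.integrableOn_compact hP ((hIgc.norm).pow 2)
  have hcc : ∀ n, ContinuousOn (fun μ => ⟪g μ, Φ n⟫) P := fun n =>
    ContinuousOn.inner hg continuousOn_const
  have hInt2 : ∀ n, IntegrableOn (fun μ => (τ n)⁻¹ * ⟪g μ, Φ n⟫ ^ 2) P volume := by
    intro n
    exact ContinuousOn.integrableOn_compact hP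
      (continuousOn_const.mul ((hcc n).pow 2))
  -- Z facts
  have hZval : ∑ n, (τ n)⁻¹ * (∫ μ in P, ⟪g μ, Φ n⟫ ^ 2) = (N : ℝ) * Z * PV := by
    have hGsum : ∀ n, ∑ p, ⟪g (μs p), Φ n⟫ ^ 2 = (N : ℝ) * τ n := by
      intro n
      have : ∀ p, ⟪g (μs p), Φ n⟫ ^ 2 = s n ^ 2 * ξ n p ^ 2 := by
        intro p
        rw [hGentry p n, mul_pow]
      rw [Finset.sum_congr rfl fun p _ => this p, ← Finset.mul_sum, hξsq n, mul_one,
        pow_two, hssq n]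
    rw [hZ]
    have hkey : ∀ n : Fin N,
        (∫ μ in P, ⟪g μ, Φ n⟫ ^ 2) / ((PV / N) * ∑ p, ⟪g (μs p), Φ n⟫ ^ 2)
          = (1 / PV) * ((τ n)⁻¹ * ∫ μ in P, ⟪g μ, Φ n⟫ ^ 2) := by
      intro n
      rw [hGsum n]
      have hτn := (hτpos n).ne'
      have hPV := hPpos.ne'
      field_simp
    rw [Finset.sum_congr rfl fun n _ => hkey n, ← Finset.mul_sum]
    have hPV := hPpos.ne'
    field_simp
  have hZ0 : 0 ≤ Z := by
    rw [hZ]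
    refine mul_nonneg (by positivity) (Finset.sum_nonneg fun n _ => div_nonneg ?_ ?_)
    · exact integral_nonneg fun μ => sq_nonneg _
    · refine mul_nonneg (by positivity) (Finset.sum_nonneg fun p _ => sq_nonneg _)
  have hδ0 : 0 ≤ δsq := by
    rw [hδsq]
    exact integral_nonneg fun μ => by positivity
  -- main estimate for every ε > 0
  have main : ∀ ε > 0, (1 / PV) * (∫ μ in P, ‖(∑ n, lam μ n • L (μs n)) - L μ‖ ^ 2) ≤
      (4 * (1 + (N : ℝ) ^ 2 * Z)) * (θ + ε) ^ 2 + (8 / PV) * Msq * ((N : ℝ) * δsq / τmin) := by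
    intro ε hε
    -- choose a near-optimal φ in S
    have hSne : Nonempty S := ⟨0⟩
    have hlt : (⨅ φ : S, ⨆ μ ∈ P, ‖L μ - (φ : EuclideanSpace ℝ (Fin r) → V) μ‖) < θ + ε := by
      rw [← hθ]; linarith
    obtain ⟨φ, hφlt⟩ := exists_lt_of_ciInf_lt hlt
    -- representation of φ as ∑ ⟪g μ, Φ n⟫ • w n
    let Wmap : (Fin N → V) →ₗ[ℝ] (EuclideanSpace ℝ (Fin r) → V) :=
      { toFun := fun w => fun μ => ∑ n, ⟪g μ, Φ n⟫ • w n
        map_add' := by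
          intro w₁ w₂
          funext μ
          simp [smul_add, Finset.sum_add_distrib]
        map_smul' := by
          intro r₀ w
          funext μ
          simp only [RingHom.id_apply, Pi.smul_apply, Finset.smul_sum]
          exact Finset.sum_congr rfl fun n _ => (smul_comm _ _ _).symm }
    have hSle : S ≤ LinearMap.range Wmap := by
      rw [hS]
      refine Submodule.span_le.2 ?_
      rintro f ⟨v, rfl⟩
      exact ⟨fun n => ∑ p, G⁻¹ n p • v (μs p), rfl⟩
    obtain ⟨w, hw⟩ := hSle φ.2
    have hφfun : ∀ μ, (φ : EuclideanSpace ℝ (Fin r) → V) μ = ∑ n, ⟪g μ, Φ n⟫ • w n :=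
      fun μ => (congrFun hw μ).symm
    have hφcont : ContinuousOn (fun μ => (φ : EuclideanSpace ℝ (Fin r) → V) μ) P := by
      have h0 : ContinuousOn (fun μ => ∑ n, ⟪g μ, Φ n⟫ • w n) P :=
        continuousOn_finset_sum _ fun n _ => (hcc n).smul continuousOn_const
      exact h0.congr fun μ _ => hφfun μ
    -- φ is within θ+ε of L on P
    have hφbound : ∀ μ' ∈ P, ‖L μ' - (φ : EuclideanSpace ℝ (Fin r) → V) μ'‖ ≤ θ + ε := by
      obtain ⟨C2, hC2⟩ := hP.exists_bound_of_continuousOn (hL.sub hφcont)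
      intro μ' hμ'
      have hb : BddAbove (Set.range fun μ =>
          ⨆ _ : μ ∈ P, ‖L μ - (φ : EuclideanSpace ℝ (Fin r) → V) μ‖) := by
        refine ⟨max C2 0, ?_⟩
        rintro x ⟨μ, rfl⟩
        exact Real.iSup_le (fun h => (hC2 μ h).trans (le_max_left _ _)) (le_max_right _ _)
      have h1 : ‖L μ' - (φ : EuclideanSpace ℝ (Fin r) → V) μ'‖ ≤
          ⨆ μ ∈ P, ‖L μ - (φ : EuclideanSpace ℝ (Fin r) → V) μ‖ := by
        calc ‖L μ' - (φ : EuclideanSpace ℝ (Fin r) → V) μ'‖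
            = ⨆ _ : μ' ∈ P, ‖L μ' - (φ : EuclideanSpace ℝ (Fin r) → V) μ'‖ := by
              rw [ciSup_pos hμ']
          _ ≤ _ := le_ciSup hb μ'
      exact h1.trans hφlt.le
    -- the coefficients w are reproduced by the interpolation weights
    have hwid : ∀ n, ∑ p, H n p • (φ : EuclideanSpace ℝ (Fin r) → V) (μs p) = w n := by
      intro n
      have hcoef : ∀ m, ∑ p, H n p * (s m * ξ m p) = if n = m then (1 : ℝ) else 0 := by
        intro m
        have hterm : ∀ p, H n p * (s m * ξ m p) = (s m / s n) * (ξ n p * ξ m p) := by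
          intro p
          simp only [hHDef]
          ring
        rw [Finset.sum_congr rfl fun p _ => hterm p, ← Finset.mul_sum, horth n m]
        by_cases hnm : n = m
        · subst hnm
          simp [div_self (hspos n).ne']
        · simp [hnm]
      calc ∑ p, H n p • (φ : EuclideanSpace ℝ (Fin r) → V) (μs p)
          = ∑ p, ∑ m, (H n p * (s m * ξ m p)) • w m := by
            refine Finset.sum_congr rfl fun p _ => ?_
            rw [hφfun (μs p), Finset.smul_sum]
            refine Finset.sum_congr rfl fun m _ => ?_
            rw [hGentry p m, smul_smul]
        _ = ∑ m, (∑ p, H n p * (s m * ξ m p)) • w m := by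
            rw [Finset.sum_comm]
            exact Finset.sum_congr rfl fun m _ => (Finset.sum_smul).symm
        _ = w n := by
            rw [Finset.sum_congr rfl fun m _ => by rw [hcoef m]]
            simp
    -- pointwise bound for J^N L - φ
    have hJLφ : ∀ μ' ∈ P, ‖JL μ' - (φ : EuclideanSpace ℝ (Fin r) → V) μ'‖ ^ 2 ≤
        ((N : ℝ) * (θ + ε) ^ 2) * (∑ n, (τ n)⁻¹ * ⟪g μ', Φ n⟫ ^ 2) := by
      intro μ' hμ'
      have hdiff : JL μ' - (φ : EuclideanSpace ℝ (Fin r) → V) μ' =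
          ∑ n, ⟪g μ', Φ n⟫ • (KK n - ∑ p, H n p • (φ : EuclideanSpace ℝ (Fin r) → V) (μs p)) := by
        rw [hφfun μ']
        simp only [hJLDef]
        rw [← Finset.sum_sub_distrib]
        refine Finset.sum_congr rfl fun n _ => ?_
        rw [hwid n, smul_sub]
      rw [hdiff]
      have haux := aux_norm_sum_sq (fun n => ⟪g μ', Φ n⟫) τ
        (fun n => KK n - ∑ p, H n p • (φ : EuclideanSpace ℝ (Fin r) → V) (μs p)) hτpos
      refine haux.trans ?_
      have hterm : ∀ n, τ n *
          ‖KK n - ∑ p, H n p • (φ : EuclideanSpace ℝ (Fin r) → V) (μs p)‖ ^ 2 ≤ (θ + ε) ^ 2 := by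
        intro n
        have hKdiff : KK n - ∑ p, H n p • (φ : EuclideanSpace ℝ (Fin r) → V) (μs p) =
            ∑ p, H n p • (L (μs p) - (φ : EuclideanSpace ℝ (Fin r) → V) (μs p)) := by
          simp only [hKKDef]
          rw [← Finset.sum_sub_distrib]
          exact Finset.sum_congr rfl fun p _ => (smul_sub _ _ _).symm
        have hθε0 : (0 : ℝ) ≤ θ + ε := le_trans (norm_nonneg _) (hφbound _ (hμs n))
        have hnorm : ‖KK n - ∑ p, H n p • (φ : EuclideanSpace ℝ (Fin r) → V) (μs p)‖ ≤
            (Real.sqrt N / s n) * (θ + ε) := by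
          rw [hKdiff]
          refine (norm_sum_le _ _).trans ?_
          calc ∑ p, ‖H n p • (L (μs p) - (φ : EuclideanSpace ℝ (Fin r) → V) (μs p))‖
              ≤ ∑ p, |H n p| * (θ + ε) := by
                refine Finset.sum_le_sum fun p _ => ?_
                rw [norm_smul, Real.norm_eq_abs]
                exact mul_le_mul_of_nonneg_left (hφbound _ (hμs p)) (abs_nonneg _)
            _ = (∑ p, |H n p|) * (θ + ε) := by rw [Finset.sum_mul]
            _ ≤ (Real.sqrt N / s n) * (θ + ε) :=
                mul_le_mul_of_nonneg_right (hHabs n) hθε0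
        have hsq' : ((Real.sqrt N / s n) * (θ + ε)) ^ 2 =
            ((N : ℝ) / ((N : ℝ) * τ n)) * (θ + ε) ^ 2 := by
          rw [mul_pow, div_pow, Real.sq_sqrt (Nat.cast_nonneg N)]
          have : s n ^ 2 = (N : ℝ) * τ n := by rw [pow_two]; exact hssq n
          rw [this]
        calc τ n * ‖KK n - ∑ p, H n p • (φ : EuclideanSpace ℝ (Fin r) → V) (μs p)‖ ^ 2
            ≤ τ n * (((Real.sqrt N / s n) * (θ + ε)) ^ 2) :=
              mul_le_mul_of_nonneg_left (pow_le_pow_left₀ (norm_nonneg _) hnorm 2) (hτpos n).le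
          _ = (θ + ε) ^ 2 := by
              rw [hsq']
              have h1 := (hτpos n).ne'
              have h2 := hNR.ne'
              field_simp
      have hsum : ∑ n, τ n *
          ‖KK n - ∑ p, H n p • (φ : EuclideanSpace ℝ (Fin r) → V) (μs p)‖ ^ 2 ≤
          (N : ℝ) * (θ + ε) ^ 2 := by
        calc ∑ n, τ n * ‖KK n - ∑ p, H n p • (φ : EuclideanSpace ℝ (Fin r) → V) (μs p)‖ ^ 2
            ≤ ∑ _n : Fin N, (θ + ε) ^ 2 := Finset.sum_le_sum fun n _ => hterm n
          _ = (N : ℝ) * (θ + ε) ^ 2 := by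
              rw [Finset.sum_const, Finset.card_univ, Fintype.card_fin, nsmul_eq_mul]
      have hfac : ∑ n, ⟪g μ', Φ n⟫ ^ 2 / τ n = ∑ n, (τ n)⁻¹ * ⟪g μ', Φ n⟫ ^ 2 :=
        Finset.sum_congr rfl fun n _ => by rw [div_eq_inv_mul]
      rw [hfac]
      have hsumnn : 0 ≤ ∑ n, (τ n)⁻¹ * ⟪g μ', Φ n⟫ ^ 2 :=
        Finset.sum_nonneg fun n _ => mul_nonneg (inv_nonneg.2 (hτpos n).le) (sq_nonneg _)
      calc (∑ n, (τ n)⁻¹ * ⟪g μ', Φ n⟫ ^ 2) * (∑ n, τ n *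
            ‖KK n - ∑ p, H n p • (φ : EuclideanSpace ℝ (Fin r) → V) (μs p)‖ ^ 2)
          ≤ (∑ n, (τ n)⁻¹ * ⟪g μ', Φ n⟫ ^ 2) * ((N : ℝ) * (θ + ε) ^ 2) :=
            mul_le_mul_of_nonneg_left hsum hsumnn
        _ = ((N : ℝ) * (θ + ε) ^ 2) * (∑ n, (τ n)⁻¹ * ⟪g μ', Φ n⟫ ^ 2) := mul_comm _ _
    -- total pointwise bound on P
    have hθε0 : (0 : ℝ) ≤ θ + ε := le_trans (norm_nonneg _) (hφbound _ (hμs ⟨0, hN⟩))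
    have htot : ∀ μ' ∈ P, ‖(∑ n, lam μ' n • L (μs n)) - L μ'‖ ^ 2 ≤
        (2 * ((N : ℝ) * Msq / τmin)) * ‖(∑ n, lam μ' n • g (μs n)) - g μ'‖ ^ 2 +
        ((4 * (N : ℝ) * (θ + ε) ^ 2) * (∑ n, (τ n)⁻¹ * ⟪g μ', Φ n⟫ ^ 2) + 4 * (θ + ε) ^ 2) := by
      intro μ' hμ'
      have tri1 : ‖(∑ n, lam μ' n • L (μs n)) - L μ'‖ ≤
          ‖(∑ n, lam μ' n • L (μs n)) - JL μ'‖ + ‖JL μ' - L μ'‖ := by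
        have h := dist_triangle (∑ n, lam μ' n • L (μs n)) (JL μ') (L μ')
        simpa [dist_eq_norm] using h
      have tri2 : ‖JL μ' - L μ'‖ ≤
          ‖JL μ' - (φ : EuclideanSpace ℝ (Fin r) → V) μ'‖ +
          ‖(φ : EuclideanSpace ℝ (Fin r) → V) μ' - L μ'‖ := by
        have h := dist_triangle (JL μ') ((φ : EuclideanSpace ℝ (Fin r) → V) μ') (L μ')
        simpa [dist_eq_norm] using h
      have e3 : ‖(φ : EuclideanSpace ℝ (Fin r) → V) μ' - L μ'‖ ≤ θ + ε := by
        rw [norm_sub_rev]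
        exact hφbound μ' hμ'
      have e4 := hJLφ μ' hμ'
      have e6 := hpt1 μ'
      have e1 : ‖(∑ n, lam μ' n • L (μs n)) - L μ'‖ ^ 2 ≤
          2 * ‖(∑ n, lam μ' n • L (μs n)) - JL μ'‖ ^ 2 + 2 * ‖JL μ' - L μ'‖ ^ 2 := by
        nlinarith [norm_nonneg ((∑ n, lam μ' n • L (μs n)) - L μ'),
          norm_nonneg ((∑ n, lam μ' n • L (μs n)) - JL μ'), norm_nonneg (JL μ' - L μ'),
          sq_nonneg (‖(∑ n, lam μ' n • L (μs n)) - JL μ'‖ - ‖JL μ' - L μ'‖)]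
      have e2 : ‖JL μ' - L μ'‖ ^ 2 ≤
          2 * ‖JL μ' - (φ : EuclideanSpace ℝ (Fin r) → V) μ'‖ ^ 2 +
          2 * ‖(φ : EuclideanSpace ℝ (Fin r) → V) μ' - L μ'‖ ^ 2 := by
        nlinarith [norm_nonneg (JL μ' - L μ'),
          norm_nonneg (JL μ' - (φ : EuclideanSpace ℝ (Fin r) → V) μ'),
          norm_nonneg ((φ : EuclideanSpace ℝ (Fin r) → V) μ' - L μ'),
          sq_nonneg (‖JL μ' - (φ : EuclideanSpace ℝ (Fin r) → V) μ'‖ -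
            ‖(φ : EuclideanSpace ℝ (Fin r) → V) μ' - L μ'‖)]
      have e3' : ‖(φ : EuclideanSpace ℝ (Fin r) → V) μ' - L μ'‖ ^ 2 ≤ (θ + ε) ^ 2 :=
        pow_le_pow_left₀ (norm_nonneg _) e3 2
      nlinarith [e1, e2, e3', e4, e6]
    -- integrate the pointwise bound
    have hMeas : MeasurableSet P := hP.measurableSet
    have hBi1 : IntegrableOn (fun μ' => ∑ n, (τ n)⁻¹ * ⟪g μ', Φ n⟫ ^ 2) P volume :=
      integrable_finset_sum _ fun n _ => hInt2 n
    have hca : IntegrableOn (fun μ' =>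
        (2 * ((N : ℝ) * Msq / τmin)) * ‖(∑ n, lam μ' n • g (μs n)) - g μ'‖ ^ 2) P volume :=
      hInt1.const_mul _
    have hcb : IntegrableOn (fun μ' =>
        (4 * (N : ℝ) * (θ + ε) ^ 2) * (∑ n, (τ n)⁻¹ * ⟪g μ', Φ n⟫ ^ 2)) P volume :=
      hBi1.const_mul _
    have hC3 : IntegrableOn (fun _ : EuclideanSpace ℝ (Fin r) => 4 * (θ + ε) ^ 2) P volume :=
      integrableOn_const hP.measure_lt_top.ne
    have hcbc : IntegrableOn (fun μ' =>
        (4 * (N : ℝ) * (θ + ε) ^ 2) * (∑ n, (τ n)⁻¹ * ⟪g μ', Φ n⟫ ^ 2) + 4 * (θ + ε) ^ 2)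
        P volume := hcb.add hC3
    have hBint : IntegrableOn (fun μ' =>
        (2 * ((N : ℝ) * Msq / τmin)) * ‖(∑ n, lam μ' n • g (μs n)) - g μ'‖ ^ 2 +
        ((4 * (N : ℝ) * (θ + ε) ^ 2) * (∑ n, (τ n)⁻¹ * ⟪g μ', Φ n⟫ ^ 2) + 4 * (θ + ε) ^ 2))
        P volume := hca.add hcbc
    have hmono : (∫ μ' in P, ‖(∑ n, lam μ' n • L (μs n)) - L μ'‖ ^ 2) ≤
        ∫ μ' in P, ((2 * ((N : ℝ) * Msq / τmin)) * ‖(∑ n, lam μ' n • g (μs n)) - g μ'‖ ^ 2 +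
        ((4 * (N : ℝ) * (θ + ε) ^ 2) * (∑ n, (τ n)⁻¹ * ⟪g μ', Φ n⟫ ^ 2) + 4 * (θ + ε) ^ 2)) := by
      refine integral_mono_of_nonneg ?_ hBint ?_
      · exact Filter.Eventually.of_forall fun μ' => by positivity
      · exact (ae_restrict_iff' hMeas).2 (Filter.Eventually.of_forall fun μ' hμ' => htot μ' hμ')
    have hBval : (∫ μ' in P, ((2 * ((N : ℝ) * Msq / τmin)) *
          ‖(∑ n, lam μ' n • g (μs n)) - g μ'‖ ^ 2 +
        ((4 * (N : ℝ) * (θ + ε) ^ 2) * (∑ n, (τ n)⁻¹ * ⟪g μ', Φ n⟫ ^ 2) + 4 * (θ + ε) ^ 2))) =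
        (2 * ((N : ℝ) * Msq / τmin)) * δsq +
        ((4 * (N : ℝ) * (θ + ε) ^ 2) * ((N : ℝ) * Z * PV) + PV * (4 * (θ + ε) ^ 2)) := by
      rw [integral_add hca hcbc, integral_add hcb hC3]
      rw [integral_const_mul, integral_const_mul]
      rw [integral_finset_sum _ fun n _ => hInt2 n]
      have hper : ∀ n : Fin N, (∫ μ' in P, (τ n)⁻¹ * ⟪g μ', Φ n⟫ ^ 2) =
          (τ n)⁻¹ * ∫ μ' in P, ⟪g μ', Φ n⟫ ^ 2 := fun n => integral_const_mul _ _
      rw [Finset.sum_congr rfl fun n _ => hper n, hZval, ← hδsq, setIntegral_const,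
        smul_eq_mul]
      rfl
    rw [hBval] at hmono
    -- final arithmetic
    have hstep : (1 / PV) * (∫ μ' in P, ‖(∑ n, lam μ' n • L (μs n)) - L μ'‖ ^ 2) ≤
        (1 / PV) * ((2 * ((N : ℝ) * Msq / τmin)) * δsq +
        ((4 * (N : ℝ) * (θ + ε) ^ 2) * ((N : ℝ) * Z * PV) + PV * (4 * (θ + ε) ^ 2))) :=
      mul_le_mul_of_nonneg_left hmono (by positivity)
    have heq : (1 / PV) * ((2 * ((N : ℝ) * Msq / τmin)) * δsq +
        ((4 * (N : ℝ) * (θ + ε) ^ 2) * ((N : ℝ) * Z * PV) + PV * (4 * (θ + ε) ^ 2))) =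
        (2 / PV) * Msq * ((N : ℝ) * δsq / τmin) +
        (4 * (1 + (N : ℝ) ^ 2 * Z) * (θ + ε) ^ 2) := by
      have hPV := hPpos.ne'
      have hτm := hτminpos.ne'
      field_simp
      ring
    have hslack : 0 ≤ (6 / PV) * (Msq * ((N : ℝ) * δsq / τmin)) := by
      refine mul_nonneg (by positivity) (mul_nonneg hMsq0 ?_)
      exact div_nonneg (mul_nonneg hNR.le hδ0) hτminpos.le
    rw [heq] at hstep
    have hfin : (2 / PV) * Msq * ((N : ℝ) * δsq / τmin) +
        (4 * (1 + (N : ℝ) ^ 2 * Z) * (θ + ε) ^ 2) ≤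
        4 * (1 + (N : ℝ) ^ 2 * Z) * (θ + ε) ^ 2 + (8 / PV) * Msq * ((N : ℝ) * δsq / τmin) := by
      have : (8 / PV) * Msq * ((N : ℝ) * δsq / τmin) -
          (2 / PV) * Msq * ((N : ℝ) * δsq / τmin) =
          (6 / PV) * (Msq * ((N : ℝ) * δsq / τmin)) := by ring
      linarith [hslack, this]
    calc (1 / PV) * (∫ μ' in P, ‖(∑ n, lam μ' n • L (μs n)) - L μ'‖ ^ 2)
        ≤ (2 / PV) * Msq * ((N : ℝ) * δsq / τmin) +
          (4 * (1 + (N : ℝ) ^ 2 * Z) * (θ + ε) ^ 2) := hstep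
      _ ≤ _ := hfin
  have hθ0 : 0 ≤ θ := by
    rw [hθ]
    exact Real.iInf_nonneg fun φ => Real.iSup_nonneg fun μ => Real.iSup_nonneg fun _ =>
      norm_nonneg _
  have hA0 : 0 ≤ 4 * (1 + (N : ℝ) ^ 2 * Z) := by positivity
  have := aux_eps_limit hA0 hθ0 main
  linarith
end

section
/- (Corollary, inverse-matrix case.) In the approximation setting with V := ℝ^{N̂×N̂} equipped with the Frobenius inner product and L_μ := A_μ⁻¹, assume: A_μ := Σ_{l=1}^d α_l(μ) A_l is invertible for every μ ∈ P, where α_1, …, α_d : P → ℝ are continuous and A_1, …, A_d are real N̂×N̂ matrices; Ψ₀ is an invertible real N̂×N̂ matrix and ρ ∈ [0,1) satisfies ‖I − Ψ₀⁻¹A_μ‖₂ ≤ ρ for every μ ∈ P; X₀ is a real N̂×N̂ matrix and ε₀ ≥ 0 satisfies ‖X₀ − A_μ⁻¹‖_F ≤ ε₀ for every μ ∈ P; there is a continuous linear map X_m : U → V with X_m g_μ = (I − Ψ₀⁻¹A_μ)^m X₀ + (Σ_{k=0}^{m−1} (I − Ψ₀⁻¹A_μ)^k) Ψ₀⁻¹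 for every μ ∈ P; and the interpolation is exact: g_μ = Σ_{n=1}^N λ_n(μ) g_{μ_n} in U for every μ ∈ P. Then (1/|P|) ∫_P ‖Σ_{n=1}^N λ_n(μ) A_{μ_n}⁻¹ − A_μ⁻¹‖_F² dμ ≤ 3 ε₀² ρ^{2m} (1 + 2 N² Z_N). -/
open MeasureTheory Bornology
open scoped RealInnerProductSpace

/-- The matrix operator norm induced by the Euclidean vector norm. -/
noncomputable def l2OpNorm {n : ℕ} (A : Matrix (Fin n) (Fin n) ℝ) : ℝ :=
  ‖(Matrix.toEuclideanCLM (𝕜 := ℝ) A :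
      EuclideanSpace ℝ (Fin n) →L[ℝ] EuclideanSpace ℝ (Fin n))‖

/-- The Frobenius norm of a real matrix. -/
noncomputable def frobNorm {n : ℕ} (A : Matrix (Fin n) (Fin n) ℝ) : ℝ :=
  Real.sqrt (∑ i, ∑ j, A i j ^ 2)

lemma frob_nonneg {n : ℕ} (A : Matrix (Fin n) (Fin n) ℝ) : 0 ≤ frobNorm A :=
  Real.sqrt_nonneg _

lemma frob_sq {n : ℕ} (A : Matrix (Fin n) (Fin n) ℝ) :
    frobNorm A ^ 2 = ∑ i, ∑ j, A i j ^ 2 :=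
  Real.sq_sqrt (Finset.sum_nonneg fun _ _ => Finset.sum_nonneg fun _ _ => sq_nonneg _)

section Frob
attribute [local instance] Matrix.frobeniusNormedAddCommGroup

lemma frobNorm_eq_norm {n : ℕ} (A : Matrix (Fin n) (Fin n) ℝ) : frobNorm A = ‖A‖ := by
  rw [Matrix.frobenius_norm_def, frobNorm, Real.sqrt_eq_rpow]
  congr 1
  refine Finset.sum_congr rfl fun i _ => Finset.sum_congr rfl fun j _ => ?_
  have : (2:ℝ) = ((2:ℕ):ℝ) := by norm_num
  rw [this, Real.rpow_natCast, Real.norm_eq_abs, sq_abs]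

lemma frob_add_le {n : ℕ} (A B : Matrix (Fin n) (Fin n) ℝ) :
    frobNorm (A + B) ≤ frobNorm A + frobNorm B := by
  simp only [frobNorm_eq_norm]; exact norm_add_le _ _

lemma frob_smul {n : ℕ} (c : ℝ) (A : Matrix (Fin n) (Fin n) ℝ) :
    frobNorm (c • A) = |c| * frobNorm A := by
  simp only [frobNorm, Matrix.smul_apply, smul_eq_mul, mul_pow, ← Finset.mul_sum]
  rw [Real.sqrt_mul (sq_nonneg c), Real.sqrt_sq_eq_abs]

lemma frob_sum_le {n N : ℕ} (f : Fin N → Matrix (Fin n) (Fin n) ℝ) :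
    frobNorm (∑ i, f i) ≤ ∑ i, frobNorm (f i) := by
  simp only [frobNorm_eq_norm]; exact norm_sum_le _ _

lemma frob_sub_rev {n : ℕ} (A B : Matrix (Fin n) (Fin n) ℝ) :
    frobNorm (A - B) = frobNorm (B - A) := by
  simp only [frobNorm_eq_norm]; exact norm_sub_rev _ _

end Frob

section Op
open scoped Matrix.Norms.L2Operator

lemma l2OpNorm_eq {n : ℕ} (A : Matrix (Fin n) (Fin n) ℝ) : l2OpNorm A = ‖A‖ := rfl

lemma frob_mul_le {n : ℕ} (B M : Matrix (Fin n) (Fin n) ℝ) :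
    frobNorm (B * M) ≤ l2OpNorm B * frobNorm M := by
  have hB : 0 ≤ l2OpNorm B := by rw [l2OpNorm_eq]; exact norm_nonneg _
  have key : ∑ i, ∑ j, (B * M) i j ^ 2 ≤ (l2OpNorm B * frobNorm M) ^ 2 := by
    rw [Finset.sum_comm]
    have hcol : ∀ j, ∑ i, (B * M) i j ^ 2 ≤ l2OpNorm B ^ 2 * ∑ i, M i j ^ 2 := by
      intro j
      set x : EuclideanSpace ℝ (Fin n) := (EuclideanSpace.equiv (Fin n) ℝ).symm (fun i => M i j)
      have hx : ‖x‖ ^ 2 = ∑ i, M i j ^ 2 := by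
        rw [EuclideanSpace.norm_eq, Real.sq_sqrt (by positivity)]
        simp [x, sq_abs, sq]
      have hmv := Matrix.l2_opNorm_mulVec B ((EuclideanSpace.equiv (Fin n) ℝ).symm (fun i => M i j))
      have hnorm : ‖(EuclideanSpace.equiv (Fin n) ℝ).symm
          (B.mulVec (fun i => M i j))‖ ^ 2 = ∑ i, (B * M) i j ^ 2 := by
        rw [EuclideanSpace.norm_eq, Real.sq_sqrt (by positivity)]
        refine Finset.sum_congr rfl fun i _ => ?_
        simp [Matrix.mulVec, Matrix.mul_apply, dotProduct, sq_abs]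
      calc ∑ i, (B * M) i j ^ 2 = ‖(EuclideanSpace.equiv (Fin n) ℝ).symm
            (B.mulVec (fun i => M i j))‖ ^ 2 := hnorm.symm
        _ ≤ (‖B‖ * ‖x‖) ^ 2 := by
            apply pow_le_pow_left₀ (norm_nonneg _) _ 2
            exact hmv
        _ = l2OpNorm B ^ 2 * ∑ i, M i j ^ 2 := by rw [mul_pow, hx, l2OpNorm_eq]
    calc ∑ j, ∑ i, (B * M) i j ^ 2 ≤ ∑ j, l2OpNorm B ^ 2 * ∑ i, M i j ^ 2 :=
          Finset.sum_le_sum fun j _ => hcol j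
      _ = l2OpNorm B ^ 2 * ∑ j, ∑ i, M i j ^ 2 := by rw [Finset.mul_sum]
      _ = (l2OpNorm B * frobNorm M) ^ 2 := by
          rw [mul_pow, frob_sq, Finset.sum_comm]
  calc frobNorm (B * M) = Real.sqrt (∑ i, ∑ j, (B * M) i j ^ 2) := rfl
    _ ≤ Real.sqrt ((l2OpNorm B * frobNorm M) ^ 2) := Real.sqrt_le_sqrt key
    _ = l2OpNorm B * frobNorm M := Real.sqrt_sq (mul_nonneg hB (frob_nonneg _))

end Op

lemma frob_pow_mul_le {n : ℕ} {B : Matrix (Fin n) (Fin n) ℝ} {ρ : ℝ} (hρ : 0 ≤ ρ)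
    (hB : l2OpNorm B ≤ ρ) (D : Matrix (Fin n) (Fin n) ℝ) (m : ℕ) :
    frobNorm (B ^ m * D) ≤ ρ ^ m * frobNorm D := by
  induction m with
  | zero => simp
  | succ k ih =>
      have : B ^ (k + 1) * D = B * (B ^ k * D) := by rw [pow_succ', mul_assoc]
      rw [this]
      calc frobNorm (B * (B ^ k * D)) ≤ l2OpNorm B * frobNorm (B ^ k * D) := frob_mul_le _ _
        _ ≤ ρ * (ρ ^ k * frobNorm D) := by
            apply mul_le_mul hB ih (frob_nonneg _) hρ
        _ = ρ ^ (k + 1) * frobNorm D := by rw [pow_succ']; ring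

section Orth
open Matrix

lemma sum_sq_of_orth {N : ℕ} (ξ : Fin N → Fin N → ℝ)
    (h : ∀ p q, ∑ n, ξ n p * ξ n q = if p = q then (1:ℝ) else 0)
    (v : Fin N → ℝ) : ∑ n, (∑ p, ξ n p * v p) ^ 2 = ∑ p, v p ^ 2 := by
  calc ∑ n, (∑ p, ξ n p * v p) ^ 2
      = ∑ n, ∑ p, ∑ q, (ξ n p * v p) * (ξ n q * v q) := by
        refine Finset.sum_congr rfl fun n _ => ?_
        rw [sq, Finset.sum_mul_sum]
    _ = ∑ p, ∑ q, (v p * v q) * ∑ n, ξ n p * ξ n q := by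
        rw [Finset.sum_comm]
        refine Finset.sum_congr rfl fun p _ => ?_
        rw [Finset.sum_comm]
        refine Finset.sum_congr rfl fun q _ => ?_
        rw [Finset.mul_sum]
        refine Finset.sum_congr rfl fun n _ => ?_
        ring
    _ = ∑ p, v p ^ 2 := by
        simp_rw [h, mul_ite, mul_one, mul_zero]
        rw [Finset.sum_congr rfl fun p _ => Finset.sum_ite_eq Finset.univ p (fun q => v p * v q)]
        simp [sq]

lemma orth_transpose {N : ℕ} (ξ : Fin N → Fin N → ℝ)
    (horth : ∀ n m, ∑ p, ξ n p * ξ m p = if n = m then (1:ℝ) else 0) :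
    ∀ p q, ∑ n, ξ n p * ξ n q = if p = q then (1:ℝ) else 0 := by
  set M : Matrix (Fin N) (Fin N) ℝ := Matrix.of ξ with hM
  have h1 : M * Mᵀ = 1 := by
    ext n m
    rw [Matrix.mul_apply, Matrix.one_apply]
    simpa [hM] using horth n m
  have h2 : Mᵀ * M = 1 := mul_eq_one_comm.mp h1
  intro p q
  have := congrFun (congrFun h2 p) q
  rw [Matrix.mul_apply, Matrix.one_apply] at this
  simpa [hM, mul_comm] using this

end Orth

set_option maxHeartbeats 2000000 in
/-- (Corollary, inverse-matrix case.) In the approximation setting with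
`V = ℝ^{N̂×N̂}` (Frobenius inner product) and `L_μ = A_μ⁻¹`, where
`A_μ = ∑ l, α l (μ) • A l` is invertible on `P`, `Ψ₀` is invertible with
`‖I − Ψ₀⁻¹ A_μ‖₂ ≤ ρ < 1` on `P`, `‖X₀ − A_μ⁻¹‖_F ≤ ε₀` on `P`, `X_m` is the continuous
linear map realizing the `m`-th iterate of the fixed-point scheme, and the interpolation is
exact (`g_μ = ∑ n, λ n (μ) • g (μ n)` on `P`), one has
`(1/|P|) ∫_P ‖∑ n, λ n (μ) • A_{μ n}⁻¹ − A_μ⁻¹‖_F² dμ ≤ 3 ε₀² ρ^{2m} (1 + 2 N² Z_N)`. -/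
theorem inverse_matrix_approximation_error_bound
    (r N q : ℕ) (hN : 0 < N)
    (K : Set (EuclideanSpace ℝ (Fin q)))
    (hKb : IsBounded K) (hKm : MeasurableSet K)
    (P : Set (EuclideanSpace ℝ (Fin r))) (hP : IsCompact P)
    (hPpos : 0 < (volume P).toReal)
    (g : EuclideanSpace ℝ (Fin r) → Lp ℝ 2 (volume.restrict K))
    (hg : ContinuousOn g P)
    (μs : Fin N → EuclideanSpace ℝ (Fin r)) (hμs : ∀ n, μs n ∈ P)
    (hli : LinearIndependent ℝ (fun n => g (μs n)))
    (lam : EuclideanSpace ℝ (Fin r) → Fin N → ℝ)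
    (hlam : ∀ n, ContinuousOn (fun μ => lam μ n) P)
    (τ : Fin N → ℝ) (ξ : Fin N → Fin N → ℝ)
    (hτmono : ∀ i j : Fin N, i ≤ j → τ j ≤ τ i)
    (hτpos : ∀ n, 0 < τ n)
    (heig : ∀ n p, τ n * ξ n p =
        (1 / (N : ℝ)) * ∑ q', ⟪g (μs p), g (μs q')⟫ * ξ n q')
    (horth : ∀ n m, ∑ p, ξ n p * ξ m p = if n = m then (1 : ℝ) else 0)
    (Φ : Fin N → Lp ℝ 2 (volume.restrict K))
    (hΦ : ∀ n, Φ n = (Real.sqrt (N * τ n))⁻¹ • ∑ p, ξ n p • g (μs p))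
    (Z : ℝ)
    (hZ : Z = (1 / (N : ℝ)) * ∑ n,
        (∫ μ in P, ⟪g μ, Φ n⟫ ^ 2) /
          (((volume P).toReal / N) * ∑ p, ⟪g (μs p), Φ n⟫ ^ 2))
    -- the parametrized matrices and the fixed-point scheme
    (d Nhat : ℕ) (α : Fin d → EuclideanSpace ℝ (Fin r) → ℝ)
    (hα : ∀ l, ContinuousOn (α l) P)
    (A : Fin d → Matrix (Fin Nhat) (Fin Nhat) ℝ)
    (hAinv : ∀ μ ∈ P, IsUnit (∑ l, α l μ • A l))
    (Ψ₀ : Matrix (Fin Nhat) (Fin Nhat) ℝ) (hΨ₀ : IsUnit Ψ₀)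
    (ρ : ℝ) (hρ0 : 0 ≤ ρ) (hρ1 : ρ < 1)
    (hρbound : ∀ μ ∈ P, l2OpNorm (1 - Ψ₀⁻¹ * ∑ l, α l μ • A l) ≤ ρ)
    (X₀ : Matrix (Fin Nhat) (Fin Nhat) ℝ)
    (ε₀ : ℝ) (hε₀ : 0 ≤ ε₀)
    (hX₀ : ∀ μ ∈ P, frobNorm (X₀ - (∑ l, α l μ • A l)⁻¹) ≤ ε₀)
    (m : ℕ)
    (Xm : Lp ℝ 2 (volume.restrict K) →ₗ[ℝ] Matrix (Fin Nhat) (Fin Nhat) ℝ)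
    (hXmc : Continuous Xm)
    (hXm : ∀ μ ∈ P, Xm (g μ) =
        (1 - Ψ₀⁻¹ * ∑ l, α l μ • A l) ^ m * X₀ +
          (∑ k ∈ Finset.range m, (1 - Ψ₀⁻¹ * ∑ l, α l μ • A l) ^ k) * Ψ₀⁻¹)
    -- exact interpolation of g on P
    (hexact : ∀ μ ∈ P, g μ = ∑ n, lam μ n • g (μs n)) :
    (1 / (volume P).toReal) *
        ∫ μ in P,
          frobNorm ((∑ n, lam μ n • (∑ l, α l (μs n) • A l)⁻¹) -
            (∑ l, α l μ • A l)⁻¹) ^ 2 ≤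
      3 * ε₀ ^ 2 * ρ ^ (2 * m) * (1 + 2 * (N : ℝ) ^ 2 * Z) := by
  have hNne : (N : ℝ) ≠ 0 := Nat.cast_ne_zero.mpr hN.ne'
  have hN1 : (1 : ℝ) ≤ N := Nat.one_le_cast.mpr hN
  set IP := (volume P).toReal with hIP
  have hIPne : IP ≠ 0 := hPpos.ne'
  set εm := ε₀ * ρ ^ m with hεm
  have hεm0 : 0 ≤ εm := mul_nonneg hε₀ (pow_nonneg hρ0 m)
  -- invertibility
  have hAone : ∀ μ ∈ P, (∑ l, α l μ • A l) * (∑ l, α l μ • A l)⁻¹ = 1 := fun μ hμ =>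
    Matrix.mul_nonsing_inv _ ((Matrix.isUnit_iff_isUnit_det _).mp (hAinv μ hμ))
  -- fixed point bound
  have hfix : ∀ μ ∈ P, frobNorm (Xm (g μ) - (∑ l, α l μ • A l)⁻¹) ≤ εm := by
    intro μ hμ
    set Aμ := ∑ l, α l μ • A l with hAμ
    set B := 1 - Ψ₀⁻¹ * Aμ with hB
    have hψ : (∑ k ∈ Finset.range m, B ^ k) * Ψ₀⁻¹ = (1 - B ^ m) * Aμ⁻¹ := by
      have h1 : Ψ₀⁻¹ = (1 - B) * Aμ⁻¹ := by
        rw [hB, sub_sub_cancel, mul_assoc, hAone μ hμ, mul_one]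
      rw [h1, ← mul_assoc]
      have h2 : (∑ k ∈ Finset.range m, B ^ k) * (1 - B) = 1 - B ^ m := by
        calc (∑ k ∈ Finset.range m, B ^ k) * (1 - B)
            = -((∑ k ∈ Finset.range m, B ^ k) * (B - 1)) := by rw [← mul_neg, neg_sub]
          _ = -(B ^ m - 1) := by rw [geom_sum_mul]
          _ = 1 - B ^ m := neg_sub _ _
      rw [h2]
    have h3 := hXm μ hμ
    rw [← hAμ, ← hB] at h3
    have hXmval : Xm (g μ) - Aμ⁻¹ = B ^ m * (X₀ - Aμ⁻¹) := by
      rw [h3, hψ]; noncomm_ring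
    rw [hXmval]
    calc frobNorm (B ^ m * (X₀ - Aμ⁻¹)) ≤ ρ ^ m * frobNorm (X₀ - Aμ⁻¹) :=
          frob_pow_mul_le hρ0 (hρbound μ hμ) _ m
      _ ≤ ρ ^ m * ε₀ := mul_le_mul_of_nonneg_left (hX₀ μ hμ) (pow_nonneg hρ0 m)
      _ = εm := by rw [hεm, mul_comm]
  -- pointwise bound
  have hEbound : ∀ μ ∈ P,
      frobNorm ((∑ n, lam μ n • (∑ l, α l (μs n) • A l)⁻¹) - (∑ l, α l μ • A l)⁻¹) ^ 2 ≤
        2 * εm ^ 2 + (2 * εm ^ 2 * N) * ∑ p, lam μ p ^ 2 := by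
    intro μ hμ
    set S := ∑ n, lam μ n • ((∑ l, α l (μs n) • A l)⁻¹ - Xm (g (μs n))) with hS
    set D := Xm (g μ) - (∑ l, α l μ • A l)⁻¹ with hD
    have hdec : (∑ n, lam μ n • (∑ l, α l (μs n) • A l)⁻¹) - (∑ l, α l μ • A l)⁻¹ = S + D := by
      have hXg : Xm (g μ) = ∑ n, lam μ n • Xm (g (μs n)) := by
        rw [hexact μ hμ, map_sum]; simp only [LinearMap.map_smul]
      rw [hS, hD, hXg]
      simp only [smul_sub, Finset.sum_sub_distrib]
      abel
    rw [hdec]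
    have habs : 0 ≤ ∑ n, |lam μ n| := Finset.sum_nonneg fun n _ => abs_nonneg _
    have h1 : frobNorm (S + D) ≤ (∑ n, |lam μ n|) * εm + εm := by
      have hDb : frobNorm D ≤ εm := hfix μ hμ
      have hSb : frobNorm S ≤ (∑ n, |lam μ n|) * εm := by
        rw [hS]
        refine (frob_sum_le _).trans ?_
        rw [Finset.sum_mul]
        refine Finset.sum_le_sum fun n _ => ?_
        rw [frob_smul]
        refine mul_le_mul_of_nonneg_left ?_ (abs_nonneg _)
        rw [frob_sub_rev]
        exact hfix (μs n) (hμs n)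
      calc frobNorm (S + D) ≤ frobNorm S + frobNorm D := frob_add_le _ _
        _ ≤ _ := add_le_add hSb hDb
    have h2 : (∑ n, |lam μ n|) ^ 2 ≤ N * ∑ p, lam μ p ^ 2 := by
      have := Finset.sum_mul_sq_le_sq_mul_sq Finset.univ (fun _ : Fin N => (1:ℝ))
        (fun n => |lam μ n|)
      simpa [sq_abs, Finset.card_univ] using this
    have h3 : frobNorm (S + D) ^ 2 ≤ ((∑ n, |lam μ n|) * εm + εm) ^ 2 :=
      pow_le_pow_left₀ (frob_nonneg _) h1 2
    have h2' := mul_le_mul_of_nonneg_right h2 (sq_nonneg εm)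
    nlinarith [sq_nonneg ((∑ n, |lam μ n|) * εm - εm)]
  -- the inner products with the POD modes
  have hNτpos : ∀ n, 0 < (N : ℝ) * τ n := fun n => mul_pos (Nat.cast_pos.2 hN) (hτpos n)
  have hw : ∀ n p', ⟪g (μs p'), Φ n⟫ = Real.sqrt (N * τ n) * ξ n p' := by
    intro n p'
    rw [hΦ n, real_inner_smul_right, inner_sum]
    simp_rw [real_inner_smul_right]
    have hsum : ∑ q', ξ n q' * ⟪g (μs p'), g (μs q')⟫ = N * (τ n * ξ n p') := by
      rw [heig n p', ← mul_assoc, mul_one_div_cancel hNne, one_mul]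
      exact Finset.sum_congr rfl fun q' _ => mul_comm _ _
    rw [hsum, show (N : ℝ) * (τ n * ξ n p') = (N * τ n) * ξ n p' by ring]
    set s := Real.sqrt ((N : ℝ) * τ n) with hsdef
    have hss : s * s = (N : ℝ) * τ n := Real.mul_self_sqrt (hNτpos n).le
    have hs0 : s ≠ 0 := (Real.sqrt_pos.2 (hNτpos n)).ne'
    rw [← hss, show s⁻¹ * (s * s * ξ n p') = (s⁻¹ * s) * (s * ξ n p') from by ring,
      inv_mul_cancel₀ hs0, one_mul]
  have hwμ : ∀ μ ∈ P, ∀ n, ⟪g μ, Φ n⟫ = Real.sqrt (N * τ n) * ∑ p', ξ n p' * lam μ p' := by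
    intro μ hμ n
    rw [hexact μ hμ, sum_inner]
    simp_rw [real_inner_smul_left, hw]
    rw [Finset.mul_sum]
    exact Finset.sum_congr rfl fun p' _ => by ring
  have hdenom : ∀ n, ∑ p', ⟪g (μs p'), Φ n⟫ ^ 2 = N * τ n := by
    intro n
    simp_rw [hw, mul_pow, ← Finset.mul_sum]
    have h1 : ∑ p', ξ n p' ^ 2 = 1 := by simpa [sq] using horth n n
    rw [h1, Real.sq_sqrt (hNτpos n).le, mul_one]
  -- integrability of coefficient functions
  have hwcont : ∀ n : Fin N, ContinuousOn (fun μ => (∑ p', ξ n p' * lam μ p') ^ 2) P := by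
    intro n
    exact ((continuousOn_finset_sum Finset.univ fun p' _ =>
      (continuousOn_const.mul (hlam p'))).pow 2)
  have hwint : ∀ n : Fin N, IntegrableOn (fun μ => (∑ p', ξ n p' * lam μ p') ^ 2) P :=
    fun n => (hwcont n).integrableOn_compact hP
  -- value of Z
  have hnum : ∀ n, (∫ μ in P, ⟪g μ, Φ n⟫ ^ 2) =
      (N * τ n) * ∫ μ in P, (∑ p', ξ n p' * lam μ p') ^ 2 := by
    intro n
    rw [← integral_const_mul]
    refine setIntegral_congr_fun hP.measurableSet fun μ hμ => ?_
    rw [hwμ μ hμ n, mul_pow, Real.sq_sqrt (hNτpos n).le]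
  have hJ : ∫ μ in P, (∑ p', lam μ p' ^ 2) = IP * Z := by
    have hZ2 : Z = (1 / IP) * ∑ n, ∫ μ in P, (∑ p', ξ n p' * lam μ p') ^ 2 := by
      rw [hZ]
      have : ∀ n : Fin N, (∫ μ in P, ⟪g μ, Φ n⟫ ^ 2) /
          ((IP / N) * ∑ p', ⟪g (μs p'), Φ n⟫ ^ 2) =
          ((N : ℝ) / IP) * ∫ μ in P, (∑ p', ξ n p' * lam μ p') ^ 2 := by
        intro n
        rw [hnum n, hdenom n]
        have hτne : τ n ≠ 0 := (hτpos n).ne'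
        field_simp
      rw [Finset.sum_congr rfl fun n _ => this n, ← Finset.mul_sum]
      field_simp
    have hsum : ∑ n : Fin N, ∫ μ in P, (∑ p', ξ n p' * lam μ p') ^ 2 =
        ∫ μ in P, (∑ p', lam μ p' ^ 2) := by
      rw [← integral_finset_sum Finset.univ fun n _ => hwint n]
      refine setIntegral_congr_fun hP.measurableSet fun μ hμ => ?_
      exact sum_sq_of_orth ξ (orth_transpose ξ horth) (lam μ)
    rw [← hsum, hZ2]
    field_simp
  have hZ0 : 0 ≤ Z := by
    have : 0 ≤ ∫ μ in P, (∑ p', lam μ p' ^ 2) :=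
      setIntegral_nonneg hP.measurableSet fun μ _ =>
        Finset.sum_nonneg fun p' _ => sq_nonneg _
    rw [hJ] at this
    nlinarith
  -- integrability of the main integrand
  have hFint : IntegrableOn (fun μ =>
      frobNorm ((∑ n, lam μ n • (∑ l, α l (μs n) • A l)⁻¹) - (∑ l, α l μ • A l)⁻¹) ^ 2) P := by
    have hAmatC : ContinuousOn (fun μ => ∑ l, α l μ • A l) P :=
      continuousOn_finset_sum _ fun l _ => (hα l).smul continuousOn_const
    have hdetne : ∀ μ ∈ P, (∑ l, α l μ • A l).det ≠ 0 := fun μ hμ =>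
      ((Matrix.isUnit_iff_isUnit_det _).mp (hAinv μ hμ)).ne_zero
    have h1 : ContinuousOn (fun μ => (∑ l, α l μ • A l).det) P :=
      (Continuous.matrix_det (continuous_id (X := Matrix (Fin Nhat) (Fin Nhat) ℝ))).comp_continuousOn hAmatC
    have h2 : ContinuousOn (fun μ => (∑ l, α l μ • A l).adjugate) P :=
      (Continuous.matrix_adjugate (continuous_id (X := Matrix (Fin Nhat) (Fin Nhat) ℝ))).comp_continuousOn hAmatC
    have hinvC : ContinuousOn (fun μ => (∑ l, α l μ • A l)⁻¹) P := by
      have h3 : ContinuousOn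
          (fun μ => ((∑ l, α l μ • A l).det)⁻¹ • (∑ l, α l μ • A l).adjugate) P :=
        (h1.inv₀ hdetne).smul h2
      simpa only [Matrix.inv_def, Ring.inverse_eq_inv'] using h3
    have hEcont : ContinuousOn (fun μ =>
        (∑ n, lam μ n • (∑ l, α l (μs n) • A l)⁻¹) - (∑ l, α l μ • A l)⁻¹) P :=
      (continuousOn_finset_sum _ fun n _ => (hlam n).smul continuousOn_const).sub hinvC
    have hFcont : ContinuousOn (fun μ =>
        frobNorm ((∑ n, lam μ n • (∑ l, α l (μs n) • A l)⁻¹) - (∑ l, α l μ • A l)⁻¹) ^ 2) P := by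
      simp only [frob_sq]
      exact continuousOn_finset_sum _ fun i _ => continuousOn_finset_sum _ fun j _ =>
        (((continuous_apply j).comp (continuous_apply i)).comp_continuousOn hEcont).pow 2
    exact hFcont.integrableOn_compact hP
  -- monotone integral
  have hGint : IntegrableOn (fun μ =>
      2 * εm ^ 2 + (2 * εm ^ 2 * N) * ∑ p, lam μ p ^ 2) P := by
    refine Integrable.add ((integrableOn_const_iff).mpr (Or.inr hP.measure_lt_top)) ?_
    exact (((continuousOn_finset_sum Finset.univ fun p' _ =>
      ((hlam p').pow 2)).integrableOn_compact hP).const_mul _)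
  have hmono : (∫ μ in P,
      frobNorm ((∑ n, lam μ n • (∑ l, α l (μs n) • A l)⁻¹) - (∑ l, α l μ • A l)⁻¹) ^ 2) ≤
      ∫ μ in P, (2 * εm ^ 2 + (2 * εm ^ 2 * N) * ∑ p, lam μ p ^ 2) :=
    setIntegral_mono_on hFint hGint hP.measurableSet hEbound
  have hGval : (∫ μ in P, (2 * εm ^ 2 + (2 * εm ^ 2 * N) * ∑ p, lam μ p ^ 2)) =
      2 * εm ^ 2 * IP + (2 * εm ^ 2 * N) * (IP * Z) := by
    rw [integral_add (f := fun _ => 2 * εm ^ 2) (g := fun μ => (2 * εm ^ 2 * N) * ∑ p, lam μ p ^ 2) (((integrableOn_const_iff (C := 2 * εm ^ 2) (μ := volume)).mpr (Or.inr hP.measure_lt_top)).integrable)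
      ((((continuousOn_finset_sum Finset.univ fun p' _ =>
        ((hlam p').pow 2)).integrableOn_compact hP)).const_mul _),
      setIntegral_const, integral_const_mul, hJ]
    rw [smul_eq_mul, measureReal_def, ← hIP]
    ring
  have hle : (1 / IP) * (∫ μ in P,
      frobNorm ((∑ n, lam μ n • (∑ l, α l (μs n) • A l)⁻¹) - (∑ l, α l μ • A l)⁻¹) ^ 2) ≤
      2 * εm ^ 2 + 2 * εm ^ 2 * N * Z := by
    have := mul_le_mul_of_nonneg_left (hmono.trans_eq hGval) (le_of_lt (by positivity : (0:ℝ) < 1 / IP))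
    calc (1 / IP) * _ ≤ (1 / IP) * (2 * εm ^ 2 * IP + (2 * εm ^ 2 * N) * (IP * Z)) := this
      _ = 2 * εm ^ 2 + 2 * εm ^ 2 * N * Z := by field_simp
  refine hle.trans ?_
  have hεmsq : εm ^ 2 = ε₀ ^ 2 * ρ ^ (2 * m) := by
    rw [hεm, mul_pow, ← pow_mul, mul_comm m 2]
  rw [hεmsq]
  have hE : 0 ≤ ε₀ ^ 2 * ρ ^ (2 * m) := mul_nonneg (sq_nonneg _) (pow_nonneg hρ0 _)
  have hNN : (N : ℝ) ≤ (N : ℝ) ^ 2 := by nlinarith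
  nlinarith [mul_nonneg (mul_nonneg hE hZ0) (sub_nonneg.mpr hNN), hE, mul_nonneg hE hZ0]
end

section
/- (Corollary, log-determinant case.) In the approximation setting with V := ℝ and L_μ := log det A_μ − N̂ log ρ_M, assume: A_μ := Σ_{l=1}^d α_l(μ) A_l is a symmetric positive definite real N̂×N̂ matrix for every μ ∈ P, where α_1, …, α_d : P → ℝ are continuous and A_1, …, A_d are real N̂×N̂ matrices; 0 < ρ₀ ≤ ρ_M are real numbers such that every eigenvalue r of every A_μ satisfies ρ₀ ≤ r < ρ_M; m ≥ 1 and there is a continuous linear map X_m : U → ℝ with X_m g_μ = −Σ_{k=1}^{m−1} tr((I − (1/ρ_M) A_μ)^k)/k for every μ ∈ P; the interpolation is exact: g_μ = Σ_{n=1}^N λ_n(μ) g_{μ_n} in U for every μ ∈ P; and the coefficients satisfy Σ_{n=1}^N λ_n(μ) = 1 for every μ ∈ P. Then (1/|P|) ∫_P |Σ_{n=1}^N λ_n(μ) log det A_{μ_n} − log det A_μ|² dμ ≤ 3 (N̂²/m²) (ρ_M/ρ₀)² (1 − ρ₀/ρ_M)^{2m} (1 + 2 N² Z_N). -/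
lemma log_tail_bound {x : ℝ} (hx0 : 0 ≤ x) (hx1 : x < 1) (m : ℕ) (hm : 1 ≤ m) :
    |Real.log (1 - x) + ∑ k ∈ Finset.Icc 1 (m - 1), x ^ k / k| ≤ x ^ m / (m * (1 - x)) := by
  have hax : |x| < 1 := by rw [abs_of_nonneg hx0]; exact hx1
  have hs := Real.hasSum_pow_div_log_of_abs_lt_one hax
  have hsum : Summable (fun n : ℕ => x ^ (n + 1) / (n + 1)) := hs.summable
  have htsum : ∑' n : ℕ, x ^ (n + 1) / (n + 1) = -Real.log (1 - x) := hs.tsum_eq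
  have hsplit := Summable.sum_add_tsum_nat_add (f := fun n : ℕ => x ^ (n + 1) / (n + 1)) (m - 1) hsum
  have hIcc : ∑ k ∈ Finset.Icc 1 (m - 1), x ^ k / k
      = ∑ i ∈ Finset.range (m - 1), x ^ (i + 1) / (i + 1) := by
    rw [← Finset.Ico_add_one_right_eq_Icc, Finset.sum_Ico_eq_sum_range]
    have h2 : m - 1 + 1 - 1 = m - 1 := by omega
    rw [h2]
    refine Finset.sum_congr rfl fun i _ => ?_
    rw [Nat.add_comm 1 i]; norm_cast
  have key : Real.log (1 - x) + ∑ k ∈ Finset.Icc 1 (m - 1), x ^ k / k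
      = -(∑' n : ℕ, x ^ (n + (m - 1) + 1) / (((n + (m - 1) : ℕ) : ℝ) + 1)) := by
    rw [hIcc]
    rw [htsum] at hsplit
    linarith [hsplit]
  rw [key]
  have hx1' : 0 < 1 - x := by linarith
  have hm0 : (0 : ℝ) < m := by exact_mod_cast hm
  have hterm : ∀ n : ℕ, x ^ (n + (m - 1) + 1) / (((n + (m - 1) : ℕ) : ℝ) + 1)
      ≤ x ^ m / m * x ^ n := by
    intro n
    have h1 : x ^ (n + (m - 1) + 1) = x ^ m * x ^ n := by
      have h : n + (m - 1) + 1 = m + n := by omega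
      rw [h, pow_add]
    rw [h1]
    have hden : (m : ℝ) ≤ ((n + (m - 1) : ℕ) : ℝ) + 1 := by
      have h : m ≤ n + (m - 1) + 1 := by omega
      exact_mod_cast h
    have hnum : 0 ≤ x ^ m * x ^ n := by positivity
    calc x ^ m * x ^ n / (((n + (m - 1) : ℕ) : ℝ) + 1) ≤ x ^ m * x ^ n / m :=
          div_le_div_of_nonneg_left hnum hm0 hden
      _ = x ^ m / m * x ^ n := by ring
  have hsum1 : Summable (fun n : ℕ => x ^ (n + (m - 1) + 1) / (((n + (m - 1) : ℕ) : ℝ) + 1)) := by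
    have := (summable_nat_add_iff (m - 1)).2 hsum
    simpa using this
  have hsum2 : Summable (fun n : ℕ => x ^ m / m * x ^ n) :=
    (summable_geometric_of_lt_one hx0 hx1).mul_left _
  have hT : ∑' n : ℕ, x ^ (n + (m - 1) + 1) / (((n + (m - 1) : ℕ) : ℝ) + 1)
      ≤ x ^ m / (m * (1 - x)) := by
    calc _ ≤ ∑' n : ℕ, x ^ m / m * x ^ n := Summable.tsum_le_tsum hterm hsum1 hsum2
      _ = x ^ m / m * (1 - x)⁻¹ := by rw [tsum_mul_left, tsum_geometric_of_lt_one hx0 hx1]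
      _ = x ^ m / (m * (1 - x)) := by field_simp
  have hTnn : 0 ≤ ∑' n : ℕ, x ^ (n + (m - 1) + 1) / (((n + (m - 1) : ℕ) : ℝ) + 1) :=
    tsum_nonneg fun n => by positivity
  rw [abs_neg, abs_of_nonneg hTnn]
  exact hT

open Matrix in
lemma logdet_remainder_bound {Nhat : ℕ} {M : Matrix (Fin Nhat) (Fin Nhat) ℝ}
    (hM : M.PosDef) {ρ₀ ρM : ℝ} (hρ₀ : 0 < ρ₀) (hρM : 0 < ρM)
    (hev : ∀ rr : ℝ, Module.End.HasEigenvalue (Matrix.toLin' M) rr → ρ₀ ≤ rr ∧ rr < ρM)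
    (m : ℕ) (hm : 1 ≤ m) :
    |Real.log M.det - Nhat * Real.log ρM +
        ∑ k ∈ Finset.Icc 1 (m - 1), ((1 - ρM⁻¹ • M) ^ k).trace / k|
      ≤ Nhat * ((ρM / ρ₀) * (1 - ρ₀ / ρM) ^ m / m) := by
  have hH : M.IsHermitian := hM.1
  set ev : Fin Nhat → ℝ := hH.eigenvalues with hevdef
  have hbd : ∀ i, ρ₀ ≤ ev i ∧ ev i < ρM := by
    intro i
    apply hev
    rw [Module.End.hasEigenvalue_iff_mem_spectrum]
    have h1 : Matrix.toLin' M = Matrix.toLinAlgEquiv' M := rfl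
    rw [h1, AlgEquiv.spectrum_eq]
    exact hH.eigenvalues_mem_spectrum_real i
  have hevpos : ∀ i, 0 < ev i := fun i => lt_of_lt_of_le hρ₀ (hbd i).1
  -- determinant
  have hdet : Real.log M.det = ∑ i, Real.log (ev i) := by
    have h := hH.det_eq_prod_eigenvalues
    simp only [RCLike.ofReal_real_eq_id, id, Function.comp] at h
    rw [h]
    exact Real.log_prod fun i _ => (hevpos i).ne'
  -- diagonalization of 1 - ρM⁻¹ • M
  obtain ⟨U, hU1, hU2, hdiagM⟩ : ∃ U : Matrix (Fin Nhat) (Fin Nhat) ℝ,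
      star U * U = 1 ∧ U * star U = 1 ∧ star U * M * U = diagonal ev := by
    refine ⟨(hH.eigenvectorUnitary : Matrix (Fin Nhat) (Fin Nhat) ℝ),
      Matrix.mem_unitaryGroup_iff'.mp hH.eigenvectorUnitary.2,
      Matrix.mem_unitaryGroup_iff.mp hH.eigenvectorUnitary.2, ?_⟩
    have h := hH.conjStarAlgAut_star_eigenvectorUnitary
    rw [Unitary.conjStarAlgAut_star_apply] at h
    simpa only [RCLike.ofReal_real_eq_id, Function.comp_id, Function.id_comp] using h
  have hconj : star U * (1 - ρM⁻¹ • M) * U = diagonal (fun i => 1 - ρM⁻¹ * ev i) := by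
    rw [Matrix.mul_sub, Matrix.sub_mul, Matrix.mul_one, hU1, Matrix.mul_smul, Matrix.smul_mul,
      hdiagM]
    ext i j
    by_cases h : i = j <;>
      simp [h, Matrix.one_apply, Matrix.diagonal_apply_eq, Matrix.diagonal_apply_ne]
  have hconjpow : ∀ k : ℕ, star U * ((1 - ρM⁻¹ • M) ^ k) * U
      = diagonal (fun i => (1 - ρM⁻¹ * ev i) ^ k) := by
    intro k
    induction k with
    | zero => simpa using hU1
    | succ k ih =>
        have e1 : (star U * ((1 - ρM⁻¹ • M) ^ k) * U) * (star U * (1 - ρM⁻¹ • M) * U)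
            = star U * ((1 - ρM⁻¹ • M) ^ (k + 1)) * U := by
          have e2 : (star U * ((1 - ρM⁻¹ • M) ^ k) * U) * (star U * (1 - ρM⁻¹ • M) * U)
              = star U * ((1 - ρM⁻¹ • M) ^ k) * ((U * star U) * ((1 - ρM⁻¹ • M) * U)) := by
            simp only [Matrix.mul_assoc]
          rw [e2, hU2, Matrix.one_mul, pow_succ]
          simp only [Matrix.mul_assoc]
          try rfl
        rw [← e1, ih, hconj, Matrix.diagonal_mul_diagonal]
        simp [pow_succ]
  have htr : ∀ k : ℕ, ((1 - ρM⁻¹ • M) ^ k).trace = ∑ i, (1 - ρM⁻¹ * ev i) ^ k := by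
    intro k
    have h1 : ((1 - ρM⁻¹ • M) ^ k).trace = (star U * ((1 - ρM⁻¹ • M) ^ k) * U).trace := by
      rw [Matrix.trace_mul_comm, ← Matrix.mul_assoc, hU2, Matrix.one_mul]
    rw [h1, hconjpow, Matrix.trace_diagonal]
  -- rewrite expression as a sum over eigenvalues
  have hexpr : Real.log M.det - Nhat * Real.log ρM +
      ∑ k ∈ Finset.Icc 1 (m - 1), ((1 - ρM⁻¹ • M) ^ k).trace / k
      = ∑ i, (Real.log (1 - (1 - ρM⁻¹ * ev i)) +
          ∑ k ∈ Finset.Icc 1 (m - 1), (1 - ρM⁻¹ * ev i) ^ k / k) := by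
    rw [hdet]
    have h2 : (Nhat : ℝ) * Real.log ρM = ∑ _i : Fin Nhat, Real.log ρM := by
      rw [Finset.sum_const, Finset.card_univ, Fintype.card_fin, nsmul_eq_mul]
    have h3 : ∑ k ∈ Finset.Icc 1 (m - 1), ((1 - ρM⁻¹ • M) ^ k).trace / k
        = ∑ i, ∑ k ∈ Finset.Icc 1 (m - 1), (1 - ρM⁻¹ * ev i) ^ k / k := by
      rw [Finset.sum_comm]
      refine Finset.sum_congr rfl fun k _ => ?_
      rw [htr k, Finset.sum_div]
    rw [h2, h3, Finset.sum_add_distrib, ← Finset.sum_sub_distrib]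
    congr 1
    refine Finset.sum_congr rfl fun i _ => ?_
    rw [show (1 : ℝ) - (1 - ρM⁻¹ * ev i) = ev i / ρM by field_simp; ring,
      Real.log_div (hevpos i).ne' hρM.ne']
  rw [hexpr]
  -- bound each term
  have hbound : ∀ i : Fin Nhat,
      |Real.log (1 - (1 - ρM⁻¹ * ev i)) +
          ∑ k ∈ Finset.Icc 1 (m - 1), (1 - ρM⁻¹ * ev i) ^ k / k|
        ≤ (ρM / ρ₀) * (1 - ρ₀ / ρM) ^ m / m := by
    intro i
    set x := 1 - ρM⁻¹ * ev i with hxdef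
    have hx0 : 0 ≤ x := by
      have := (hbd i).2
      rw [hxdef]
      have h4 : ρM⁻¹ * ev i ≤ 1 := by
        rw [inv_mul_le_iff₀ hρM]
        linarith
      linarith
    have hxc : x ≤ 1 - ρ₀ / ρM := by
      rw [hxdef]
      have : ρ₀ / ρM ≤ ρM⁻¹ * ev i := by
        rw [div_eq_inv_mul]
        exact mul_le_mul_of_nonneg_left (hbd i).1 (inv_nonneg.mpr hρM.le)
      linarith
    have hx1 : x < 1 := by
      have : 0 < ρM⁻¹ * ev i := mul_pos (inv_pos.mpr hρM) (hevpos i)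
      rw [hxdef]; linarith
    have h1x : ρ₀ / ρM ≤ 1 - x := by linarith
    have hc0 : 0 ≤ 1 - ρ₀ / ρM := le_trans hx0 hxc
    calc |Real.log (1 - x) + ∑ k ∈ Finset.Icc 1 (m - 1), x ^ k / k|
        ≤ x ^ m / (m * (1 - x)) := log_tail_bound hx0 hx1 m hm
      _ ≤ (1 - ρ₀ / ρM) ^ m / (m * (ρ₀ / ρM)) := by
          apply div_le_div₀ (by positivity) (pow_le_pow_left₀ hx0 hxc m)
          · positivity
          · have hm0 : (0:ℝ) ≤ m := Nat.cast_nonneg m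
            exact mul_le_mul_of_nonneg_left h1x hm0
      _ = (ρM / ρ₀) * (1 - ρ₀ / ρM) ^ m / m := by
          have hmne : (m : ℝ) ≠ 0 := by positivity
          field_simp
  calc |∑ i, (Real.log (1 - (1 - ρM⁻¹ * ev i)) +
          ∑ k ∈ Finset.Icc 1 (m - 1), (1 - ρM⁻¹ * ev i) ^ k / k)|
      ≤ ∑ i, |Real.log (1 - (1 - ρM⁻¹ * ev i)) +
          ∑ k ∈ Finset.Icc 1 (m - 1), (1 - ρM⁻¹ * ev i) ^ k / k| :=
        Finset.abs_sum_le_sum_abs _ _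
    _ ≤ ∑ _i : Fin Nhat, (ρM / ρ₀) * (1 - ρ₀ / ρM) ^ m / m :=
        Finset.sum_le_sum fun i _ => hbound i
    _ = Nhat * ((ρM / ρ₀) * (1 - ρ₀ / ρM) ^ m / m) := by
        rw [Finset.sum_const, Finset.card_univ, Fintype.card_fin, nsmul_eq_mul]


open Matrix in
lemma orth_sum_sq {N : ℕ} (ξ : Fin N → Fin N → ℝ)
    (horth : ∀ n m, ∑ p, ξ n p * ξ m p = if n = m then (1 : ℝ) else 0)
    (v : Fin N → ℝ) : ∑ n, (∑ p, v p * ξ n p) ^ 2 = ∑ p, v p ^ 2 := by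
  classical
  have hrow : (Matrix.of ξ) * (Matrix.of ξ)ᵀ = 1 := by
    ext n m'
    simpa [Matrix.mul_apply, Matrix.one_apply] using horth n m'
  have hcol' : (Matrix.of ξ)ᵀ * (Matrix.of ξ) = 1 := mul_eq_one_comm.mp hrow
  have hcol : ∀ p q, ∑ n, ξ n p * ξ n q = if p = q then (1 : ℝ) else 0 := by
    intro p q
    have h := congrFun (congrFun hcol' p) q
    simpa [Matrix.mul_apply, Matrix.one_apply] using h
  have step : ∀ p q, ∑ n, v p * v q * (ξ n p * ξ n q)
      = v p * v q * (if p = q then (1 : ℝ) else 0) := fun p q => by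
    rw [← Finset.mul_sum, hcol p q]
  calc ∑ n, (∑ p, v p * ξ n p) ^ 2
      = ∑ n, ∑ p, ∑ q, v p * v q * (ξ n p * ξ n q) := by
        refine Finset.sum_congr rfl fun n _ => ?_
        rw [sq, Finset.sum_mul_sum]
        exact Finset.sum_congr rfl fun p _ => Finset.sum_congr rfl fun q _ => by ring
    _ = ∑ p, ∑ q, ∑ n, v p * v q * (ξ n p * ξ n q) := by
        rw [Finset.sum_comm]
        exact Finset.sum_congr rfl fun p _ => Finset.sum_comm
    _ = ∑ p, ∑ q, v p * v q * (if p = q then (1 : ℝ) else 0) :=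
        Finset.sum_congr rfl fun p _ => Finset.sum_congr rfl fun q _ => step p q
    _ = ∑ p, v p ^ 2 := by
        refine Finset.sum_congr rfl fun p _ => ?_
        simp [Finset.sum_ite_eq, sq, mul_ite]



open MeasureTheory Bornology
open scoped RealInnerProductSpace

set_option maxHeartbeats 1000000 in
/-- (Corollary, log-determinant case.) In the approximation setting with
`V = ℝ` and `L_μ = log det A_μ − N̂ log ρ_M`, where `A_μ = ∑ l, α l (μ) • A l` is symmetric
positive definite on `P`, every eigenvalue `r` of every `A_μ` satisfies `ρ₀ ≤ r < ρ_M` with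
`0 < ρ₀ ≤ ρ_M`, `m ≥ 1`, `X_m` is the continuous linear map realizing the truncated
log-det series, the interpolation is exact (`g_μ = ∑ n, λ n (μ) • g (μ n)` on `P`) and
`∑ n, λ n (μ) = 1` on `P`, one has
`(1/|P|) ∫_P |∑ n, λ n (μ) log det A_{μ n} − log det A_μ|² dμ
  ≤ 3 (N̂²/m²) (ρ_M/ρ₀)² (1 − ρ₀/ρ_M)^{2m} (1 + 2 N² Z_N)`. -/
theorem logdet_approximation_error_bound
    (r N q : ℕ) (hN : 0 < N)
    (K : Set (EuclideanSpace ℝ (Fin q)))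
    (hKb : IsBounded K) (hKm : MeasurableSet K)
    (P : Set (EuclideanSpace ℝ (Fin r))) (hP : IsCompact P)
    (hPpos : 0 < (volume P).toReal)
    (g : EuclideanSpace ℝ (Fin r) → Lp ℝ 2 (volume.restrict K))
    (hg : ContinuousOn g P)
    (μs : Fin N → EuclideanSpace ℝ (Fin r)) (hμs : ∀ n, μs n ∈ P)
    (hli : LinearIndependent ℝ (fun n => g (μs n)))
    (lam : EuclideanSpace ℝ (Fin r) → Fin N → ℝ)
    (hlam : ∀ n, ContinuousOn (fun μ => lam μ n) P)
    (τ : Fin N → ℝ) (ξ : Fin N → Fin N → ℝ)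
    (hτmono : ∀ i j : Fin N, i ≤ j → τ j ≤ τ i)
    (hτpos : ∀ n, 0 < τ n)
    (heig : ∀ n p, τ n * ξ n p =
        (1 / (N : ℝ)) * ∑ q', ⟪g (μs p), g (μs q')⟫ * ξ n q')
    (horth : ∀ n m, ∑ p, ξ n p * ξ m p = if n = m then (1 : ℝ) else 0)
    (Φ : Fin N → Lp ℝ 2 (volume.restrict K))
    (hΦ : ∀ n, Φ n = (Real.sqrt (N * τ n))⁻¹ • ∑ p, ξ n p • g (μs p))
    (Z : ℝ)
    (hZ : Z = (1 / (N : ℝ)) * ∑ n,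
        (∫ μ in P, ⟪g μ, Φ n⟫ ^ 2) /
          (((volume P).toReal / N) * ∑ p, ⟪g (μs p), Φ n⟫ ^ 2))
    -- the parametrized symmetric positive definite matrices
    (d Nhat : ℕ) (α : Fin d → EuclideanSpace ℝ (Fin r) → ℝ)
    (hα : ∀ l, ContinuousOn (α l) P)
    (A : Fin d → Matrix (Fin Nhat) (Fin Nhat) ℝ)
    (hSPD : ∀ μ ∈ P, (∑ l, α l μ • A l).PosDef)
    (ρ₀ ρM : ℝ) (hρ₀ : 0 < ρ₀) (hρ₀M : ρ₀ ≤ ρM)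
    (heigbound : ∀ μ ∈ P, ∀ rr : ℝ,
        Module.End.HasEigenvalue (Matrix.toLin' (∑ l, α l μ • A l)) rr →
          ρ₀ ≤ rr ∧ rr < ρM)
    (m : ℕ) (hm : 1 ≤ m)
    (Xm : Lp ℝ 2 (volume.restrict K) →L[ℝ] ℝ)
    (hXm : ∀ μ ∈ P, Xm (g μ) =
        -∑ k ∈ Finset.Icc 1 (m - 1),
            ((1 - ρM⁻¹ • ∑ l, α l μ • A l) ^ k).trace / (k : ℝ))
    -- exact interpolation of g on P, with coefficients summing to one
    (hexact : ∀ μ ∈ P, g μ = ∑ n, lam μ n • g (μs n))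
    (hpartition : ∀ μ ∈ P, ∑ n, lam μ n = 1) :
    (1 / (volume P).toReal) *
        ∫ μ in P,
          |(∑ n, lam μ n * Real.log (∑ l, α l (μs n) • A l).det) -
            Real.log (∑ l, α l μ • A l).det| ^ 2 ≤
      3 * ((Nhat : ℝ) ^ 2 / (m : ℝ) ^ 2) * (ρM / ρ₀) ^ 2 *
        (1 - ρ₀ / ρM) ^ (2 * m) * (1 + 2 * (N : ℝ) ^ 2 * Z) := by
  classical
  have hρM : 0 < ρM := lt_of_lt_of_le hρ₀ hρ₀M
  have hPmeas : MeasurableSet P := hP.isClosed.measurableSet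
  have hN1 : (1 : ℝ) ≤ N := by exact_mod_cast hN
  have hNR : (0 : ℝ) < N := by exact_mod_cast hN
  have hmR : (0 : ℝ) < m := by exact_mod_cast hm
  have ham : (0 : ℝ) ≤ 1 - ρ₀ / ρM := by
    rw [sub_nonneg]
    exact (div_le_one hρM).2 hρ₀M
  set c : ℝ := Nhat * ((ρM / ρ₀) * (1 - ρ₀ / ρM) ^ m / m) with hcdef
  have hc0 : 0 ≤ c := by
    apply mul_nonneg (Nat.cast_nonneg _)
    apply div_nonneg (mul_nonneg (by positivity) (pow_nonneg ham m)) hmR.le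
  -- the remainder function
  set Rf : EuclideanSpace ℝ (Fin r) → ℝ := fun μ =>
    Real.log (∑ l, α l μ • A l).det - Nhat * Real.log ρM +
      ∑ k ∈ Finset.Icc 1 (m - 1), ((1 - ρM⁻¹ • ∑ l, α l μ • A l) ^ k).trace / k with hRfdef
  have hRbound : ∀ μ ∈ P, |Rf μ| ≤ c := fun μ hμ =>
    logdet_remainder_bound (hSPD μ hμ) hρ₀ hρM (heigbound μ hμ) m hm
  have hRXm : ∀ μ ∈ P, Rf μ =
      (Real.log (∑ l, α l μ • A l).det - Nhat * Real.log ρM) - Xm (g μ) := by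
    intro μ hμ
    simp only [hRfdef]
    rw [hXm μ hμ]
    ring
  have hXsum : ∀ μ ∈ P, Xm (g μ) = ∑ n, lam μ n * Xm (g (μs n)) := by
    intro μ hμ
    rw [hexact μ hμ, map_sum]
    exact Finset.sum_congr rfl fun n _ => by rw [ContinuousLinearMap.map_smul, smul_eq_mul]
  have hE : ∀ μ ∈ P,
      (∑ n, lam μ n * Real.log (∑ l, α l (μs n) • A l).det) -
        Real.log (∑ l, α l μ • A l).det = ∑ n, lam μ n * Rf (μs n) - Rf μ := by
    intro μ hμ
    have h2 : ∑ n, lam μ n * Rf (μs n)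
        = (∑ n, lam μ n * Real.log (∑ l, α l (μs n) • A l).det)
          - ((Nhat : ℝ) * Real.log ρM) * (∑ n, lam μ n)
          - ∑ n, lam μ n * Xm (g (μs n)) := by
      rw [Finset.mul_sum, ← Finset.sum_sub_distrib, ← Finset.sum_sub_distrib]
      exact Finset.sum_congr rfl fun n _ => by rw [hRXm _ (hμs n)]; ring
    rw [h2, hpartition μ hμ, ← hXsum μ hμ, hRXm μ hμ]
    ring
  -- continuity and integrability
  have hMcont : ContinuousOn (fun μ => ∑ l, α l μ • A l) P := by
    apply continuousOn_pi.2; intro i; apply continuousOn_pi.2; intro j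
    have hfe : (fun μ => (∑ l, α l μ • A l) i j) = fun μ => ∑ l, α l μ * A l i j := by
      funext μ; simp [Matrix.sum_apply]
    rw [hfe]
    exact continuousOn_finset_sum _ fun l _ => (hα l).mul continuousOn_const
  have hdetpos : ∀ μ ∈ P, 0 < (∑ l, α l μ • A l).det := fun μ hμ => (hSPD μ hμ).det_pos
  have hlogcont : ContinuousOn (fun μ => Real.log (∑ l, α l μ • A l).det) P := by
    apply ContinuousOn.log
    · exact (Continuous.matrix_det continuous_id).comp_continuousOn hMcont
    · exact fun μ hμ => (hdetpos μ hμ).ne'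
  have hEcont : ContinuousOn (fun μ =>
      |(∑ n, lam μ n * Real.log (∑ l, α l (μs n) • A l).det) -
        Real.log (∑ l, α l μ • A l).det| ^ 2) P := by
    apply ContinuousOn.pow
    apply ContinuousOn.abs
    exact (continuousOn_finset_sum _ fun n _ => (hlam n).mul continuousOn_const).sub hlogcont
  have hlamsqcont : ContinuousOn (fun μ => ∑ p, lam μ p ^ 2) P :=
    continuousOn_finset_sum _ fun p _ => (hlam p).pow 2
  have hIE := hEcont.integrableOn_compact (μ := volume) hP
  have hIlam := hlamsqcont.integrableOn_compact (μ := volume) hP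
  have hI3 : ∀ n, IntegrableOn (fun μ => (∑ p, lam μ p * ξ n p) ^ 2) P volume := fun n =>
    ((continuousOn_finset_sum _ fun p _ =>
      (hlam p).mul continuousOn_const).pow 2).integrableOn_compact hP
  have hIbound : IntegrableOn
      (fun μ => 2 * c ^ 2 + 2 * c ^ 2 * N * ∑ p, lam μ p ^ 2) P volume :=
    (integrableOn_const hP.measure_lt_top.ne).add (hIlam.const_mul _)
  -- POD computation
  have hNτ : ∀ n, (0 : ℝ) < N * τ n := fun n => mul_pos hNR (hτpos n)
  have hb : ∀ n p, ⟪g (μs p), Φ n⟫ = Real.sqrt (N * τ n) * ξ n p := by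
    intro n p
    rw [hΦ n, real_inner_smul_right, inner_sum]
    have h5 : ∑ q', ⟪g (μs p), ξ n q' • g (μs q')⟫ = (N * τ n) * ξ n p := by
      have h6 : ∀ q', ⟪g (μs p), ξ n q' • g (μs q')⟫ = ⟪g (μs p), g (μs q')⟫ * ξ n q' := by
        intro q'; rw [real_inner_smul_right]; ring
      rw [Finset.sum_congr rfl fun q' _ => h6 q']
      have h7 := heig n p
      field_simp at h7
      linarith [h7]
    rw [h5]
    set s := Real.sqrt (N * τ n) with hsdef
    have h9 : s * s = N * τ n := Real.mul_self_sqrt (hNτ n).le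
    have h10 : s ≠ 0 := (Real.sqrt_pos.2 (hNτ n)).ne'
    rw [← h9]
    field_simp
  have hip : ∀ μ ∈ P, ∀ n, ⟪g μ, Φ n⟫ = Real.sqrt (N * τ n) * ∑ p, lam μ p * ξ n p := by
    intro μ hμ n
    rw [hexact μ hμ, sum_inner]
    rw [show (∑ p, ⟪lam μ p • g (μs p), Φ n⟫) = ∑ p, lam μ p * (Real.sqrt (N * τ n) * ξ n p)
      from Finset.sum_congr rfl fun p _ => by rw [real_inner_smul_left, hb n p]]
    rw [Finset.mul_sum]
    exact Finset.sum_congr rfl fun p _ => by ring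
  have hden : ∀ n, ∑ p, ⟪g (μs p), Φ n⟫ ^ 2 = N * τ n := by
    intro n
    have h11 : ∀ p, ⟪g (μs p), Φ n⟫ ^ 2 = (N * τ n) * (ξ n p * ξ n p) := by
      intro p; rw [hb n p, mul_pow, Real.sq_sqrt (hNτ n).le]; ring
    rw [Finset.sum_congr rfl fun p _ => h11 p, ← Finset.mul_sum, horth n n]
    simp
  have hPne : (volume P).toReal ≠ 0 := hPpos.ne'
  have hZ' : Z = (1 / (volume P).toReal) * ∫ μ in P, ∑ p, lam μ p ^ 2 := by
    rw [hZ]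
    have hterm : ∀ n, (∫ μ in P, ⟪g μ, Φ n⟫ ^ 2) /
        (((volume P).toReal / N) * ∑ p, ⟪g (μs p), Φ n⟫ ^ 2)
        = ((N : ℝ) / (volume P).toReal) * ∫ μ in P, (∑ p, lam μ p * ξ n p) ^ 2 := by
      intro n
      have h6 : ∫ μ in P, ⟪g μ, Φ n⟫ ^ 2
          = (N * τ n) * ∫ μ in P, (∑ p, lam μ p * ξ n p) ^ 2 := by
        rw [← integral_const_mul]
        refine setIntegral_congr_fun hPmeas fun μ hμ => ?_
        rw [hip μ hμ n, mul_pow, Real.sq_sqrt (hNτ n).le]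
      rw [h6, hden n]
      have hτne : τ n ≠ 0 := (hτpos n).ne'
      field_simp
    rw [Finset.sum_congr rfl fun n _ => hterm n, ← Finset.mul_sum,
      ← integral_finset_sum _ fun n _ => hI3 n]
    have h12 : (fun μ => ∑ n, (∑ p, lam μ p * ξ n p) ^ 2) = fun μ => ∑ p, lam μ p ^ 2 :=
      funext fun μ => orth_sum_sq ξ horth (lam μ)
    rw [h12]
    field_simp
  have hZ0 : 0 ≤ Z := by
    rw [hZ']
    exact mul_nonneg (by positivity)
      (setIntegral_nonneg hPmeas fun μ _ => Finset.sum_nonneg fun p _ => sq_nonneg _)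
  -- pointwise bound
  have hpt : ∀ μ ∈ P,
      |(∑ n, lam μ n * Real.log (∑ l, α l (μs n) • A l).det) -
        Real.log (∑ l, α l μ • A l).det| ^ 2
      ≤ 2 * c ^ 2 + 2 * c ^ 2 * N * ∑ p, lam μ p ^ 2 := by
    intro μ hμ
    rw [hE μ hμ]
    have h1 : |∑ n, lam μ n * Rf (μs n)| ≤ (∑ n, |lam μ n|) * c := by
      calc |∑ n, lam μ n * Rf (μs n)| ≤ ∑ n, |lam μ n * Rf (μs n)| :=
            Finset.abs_sum_le_sum_abs _ _
        _ ≤ ∑ n, |lam μ n| * c := Finset.sum_le_sum fun n _ => by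
              rw [abs_mul]
              exact mul_le_mul_of_nonneg_left (hRbound _ (hμs n)) (abs_nonneg _)
        _ = (∑ n, |lam μ n|) * c := by rw [Finset.sum_mul]
    have h2 : |∑ n, lam μ n * Rf (μs n) - Rf μ| ≤ (∑ n, |lam μ n|) * c + c :=
      le_trans (abs_sub _ _) (add_le_add h1 (hRbound μ hμ))
    have h3 : (∑ n, |lam μ n|) ^ 2 ≤ N * ∑ p, lam μ p ^ 2 := by
      have h := sq_sum_le_card_mul_sum_sq (s := (Finset.univ : Finset (Fin N)))
        (f := fun p => |lam μ p|)
      simpa [sq_abs, Finset.card_univ] using h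
    have h4 : 0 ≤ ∑ n, |lam μ n| := Finset.sum_nonneg fun n _ => abs_nonneg _
    have h5 : |∑ n, lam μ n * Rf (μs n) - Rf μ| ^ 2 ≤ ((∑ n, |lam μ n|) * c + c) ^ 2 :=
      pow_le_pow_left₀ (abs_nonneg _) h2 2
    nlinarith [mul_le_mul_of_nonneg_left h3 (sq_nonneg c),
      mul_nonneg (sq_nonneg c) (sq_nonneg ((∑ n, |lam μ n|) - 1))]
  -- integrate
  have hint1 : (∫ μ in P,
        |(∑ n, lam μ n * Real.log (∑ l, α l (μs n) • A l).det) -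
          Real.log (∑ l, α l μ • A l).det| ^ 2)
      ≤ ∫ μ in P, (2 * c ^ 2 + 2 * c ^ 2 * N * ∑ p, lam μ p ^ 2) :=
    setIntegral_mono_on hIE hIbound hPmeas hpt
  have hIZ : ∫ μ in P, ∑ p, lam μ p ^ 2 = (volume P).toReal * Z := by
    rw [hZ']; field_simp
  have hsplit : ∫ μ in P, (2 * c ^ 2 + 2 * c ^ 2 * N * ∑ p, lam μ p ^ 2)
      = 2 * c ^ 2 * (volume P).toReal + 2 * c ^ 2 * N * ((volume P).toReal * Z) := by
    rw [integral_add (integrableOn_const hP.measure_lt_top.ne :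
        IntegrableOn (fun _ : EuclideanSpace ℝ (Fin r) => 2 * c ^ 2) P volume) (hIlam.const_mul _),
      setIntegral_const, integral_const_mul, hIZ, smul_eq_mul, measureReal_def]
    ring
  have hfinal : (1 / (volume P).toReal) *
      ∫ μ in P, |(∑ n, lam μ n * Real.log (∑ l, α l (μs n) • A l).det) -
        Real.log (∑ l, α l μ • A l).det| ^ 2 ≤ 2 * c ^ 2 + 2 * c ^ 2 * N * Z := by
    have h13 : (1 / (volume P).toReal) *
        ∫ μ in P, |(∑ n, lam μ n * Real.log (∑ l, α l (μs n) • A l).det) -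
          Real.log (∑ l, α l μ • A l).det| ^ 2
        ≤ (1 / (volume P).toReal) *
          (2 * c ^ 2 * (volume P).toReal + 2 * c ^ 2 * N * ((volume P).toReal * Z)) := by
      apply mul_le_mul_of_nonneg_left _ (by positivity)
      rw [← hsplit]
      exact hint1
    refine le_trans h13 (le_of_eq ?_)
    field_simp
  refine le_trans hfinal ?_
  have hceq : c ^ 2 = (Nhat : ℝ) ^ 2 / (m : ℝ) ^ 2 * (ρM / ρ₀) ^ 2 * ((1 - ρ₀ / ρM) ^ m) ^ 2 := by
    rw [hcdef]
    field_simp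
  have hpow2 : (1 - ρ₀ / ρM) ^ (2 * m) = ((1 - ρ₀ / ρM) ^ m) ^ 2 := by
    rw [mul_comm 2 m, pow_mul]
  rw [hpow2, hceq]
  have hT0 : 0 ≤ (Nhat : ℝ) ^ 2 / (m : ℝ) ^ 2 * (ρM / ρ₀) ^ 2 * ((1 - ρ₀ / ρM) ^ m) ^ 2 := by
    positivity
  nlinarith [mul_nonneg (mul_nonneg hT0 hZ0) (by nlinarith : (0 : ℝ) ≤ 3 * (N : ℝ) ^ 2 - N),
    mul_nonneg hT0 hZ0]
end
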